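/- arXiv:1508.05574 — 5 statements merged into one kernel-verified Lean document; each statement's English description precedes it below -/
import Mathlib

section
/- Let λ be a nonnegative finitely additive set function on a ring A of subsets of Ω, with outer measure λ*(E) = inf{λ(A) : A ∈ A, E ⊆ A} (with inf ∅ = ∞) and inner measure λ_*(E) = sup{λ(B) : B ∈ A, B ⊆ E}. If A, B ⊆ Ω and f is λ-integrable with 1_A ≤ f ≤ 1_B pointwise, then λ*(A) ≤ ∫ f dλ ≤ λ_*(B). -/
open scoped ENNReal
open MeasureTheory Filter

namespace FA

variable {Ω : Type*}

/-- Outer measure induced by a finitely additive set function on a ring. -/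
noncomputable def outer (𝒜 : Set (Set Ω)) (l : Set Ω → ℝ) (E : Set Ω) : ℝ≥0∞ :=
  ⨅ (A : Set Ω) (_ : A ∈ 𝒜) (_ : E ⊆ A), ENNReal.ofReal (l A)

/-- Inner measure induced by a finitely additive set function on a ring. -/
noncomputable def inner (𝒜 : Set (Set Ω)) (l : Set Ω → ℝ) (E : Set Ω) : ℝ≥0∞ :=
  ⨆ (B : Set Ω) (_ : B ∈ 𝒜) (_ : B ⊆ E), ENNReal.ofReal (l B)

/-- `f` is an `𝒜`-simple function. -/
def IsSimple (𝒜 : Set (Set Ω)) (f : Ω → ℝ) : Prop :=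
  ∃ (s : Finset (Set Ω)) (c : Set Ω → ℝ), (∀ A ∈ s, A ∈ 𝒜) ∧
    ∀ ω, f ω = ∑ A ∈ s, c A * (A.indicator (fun _ => (1 : ℝ)) ω)

/-- `I` is the elementary integral of the `𝒜`-simple function `f` with respect to `l`. -/
def SimpleIntegralEq (𝒜 : Set (Set Ω)) (l : Set Ω → ℝ) (f : Ω → ℝ) (I : ℝ) : Prop :=
  ∃ (s : Finset (Set Ω)) (c : Set Ω → ℝ), (∀ A ∈ s, A ∈ 𝒜) ∧
    (∀ ω, f ω = ∑ A ∈ s, c A * (A.indicator (fun _ => (1 : ℝ)) ω)) ∧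
    I = ∑ A ∈ s, c A * l A

/-- `f n` converges to `g` in `l`-measure. -/
def ConvInMeasure (𝒜 : Set (Set Ω)) (l : Set Ω → ℝ) (f : ℕ → Ω → ℝ) (g : Ω → ℝ) : Prop :=
  ∀ c : ℝ, 0 < c →
    Tendsto (fun n => outer 𝒜 l {ω | c < |f n ω - g ω|}) atTop (nhds 0)

/-- The sequence `f` is Cauchy in the `L¹(l)` seminorm. -/
def CauchyL1 (𝒜 : Set (Set Ω)) (l : Set Ω → ℝ) (f : ℕ → Ω → ℝ) : Prop :=
  ∀ ε : ℝ, 0 < ε → ∃ N : ℕ, ∀ m ≥ N, ∀ n ≥ N,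
    ∃ I : ℝ, SimpleIntegralEq 𝒜 l (fun ω => |f m ω - f n ω|) I ∧ I < ε

/-- `f` is integrable in the finitely additive (Dunford–Schwartz) sense with integral `I`. -/
def HasIntegral (𝒜 : Set (Set Ω)) (l : Set Ω → ℝ) (f : Ω → ℝ) (I : ℝ) : Prop :=
  ∃ (g : ℕ → Ω → ℝ) (J : ℕ → ℝ), (∀ n, IsSimple 𝒜 (g n)) ∧
    ConvInMeasure 𝒜 l g f ∧ CauchyL1 𝒜 l g ∧
    (∀ n, SimpleIntegralEq 𝒜 l (g n) (J n)) ∧ Tendsto J atTop (nhds I)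

/-- `f ∈ L¹(l)`. -/
def MemL1 (𝒜 : Set (Set Ω)) (l : Set Ω → ℝ) (f : Ω → ℝ) : Prop :=
  ∃ I : ℝ, HasIntegral 𝒜 l f I

/-- `f` is `l`-measurable: an `l`-limit in measure of `𝒜`-simple functions. -/
def FAMeasurable (𝒜 : Set (Set Ω)) (l : Set Ω → ℝ) (f : Ω → ℝ) : Prop :=
  ∃ g : ℕ → Ω → ℝ, (∀ n, IsSimple 𝒜 (g n)) ∧ ConvInMeasure 𝒜 l g f

/-- `(𝒜, l)` is a finitely additive measure structure on `Ω`. -/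
def FAMeasure (𝒜 : Set (Set Ω)) (l : Set Ω → ℝ) : Prop :=
  MeasureTheory.IsSetRing 𝒜 ∧ (∀ A ∈ 𝒜, 0 ≤ l A) ∧ l ∅ = 0 ∧
    ∀ A ∈ 𝒜, ∀ B ∈ 𝒜, Disjoint A B → l (A ∪ B) = l A + l B

/-- The ring `𝒜(l)` of sets whose inner and outer measures agree and are finite. -/
def AgreeRing (𝒜 : Set (Set Ω)) (l : Set Ω → ℝ) : Set (Set Ω) :=
  {E : Set Ω | outer 𝒜 l E = inner 𝒜 l E ∧ outer 𝒜 l E < ⊤}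

end FA

open FA MeasureTheory

namespace FAProof
open scoped Classical

variable {Ω : Type*} {𝒜 : Set (Set Ω)} {l : Set Ω → ℝ}

/-- `(s, c)` represents the simple function `u`. -/
def Rep (𝒜 : Set (Set Ω)) (s : Finset (Set Ω)) (c : Set Ω → ℝ) (u : Ω → ℝ) : Prop :=
  (∀ A ∈ s, A ∈ 𝒜) ∧ ∀ ω, u ω = ∑ A ∈ s, c A * (A.indicator (fun _ => (1 : ℝ)) ω)

noncomputable def intg (l : Set Ω → ℝ) (s : Finset (Set Ω)) (c : Set Ω → ℝ) : ℝ :=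
  ∑ A ∈ s, c A * l A

lemma eval_filter (s : Finset (Set Ω)) (c : Set Ω → ℝ) (ω : Ω) :
    ∑ A ∈ s, c A * (A.indicator (fun _ => (1 : ℝ)) ω) = ∑ A ∈ s.filter (ω ∈ ·), c A := by
  rw [Finset.sum_filter]
  refine Finset.sum_congr rfl fun A _ => ?_
  by_cases h : ω ∈ A
  · simp [Set.indicator_of_mem h, h]
  · simp [Set.indicator_of_notMem h, h]

lemma sum_comb (s t : Finset (Set Ω)) (c d : Set Ω → ℝ) (a b : ℝ) (F : Set Ω → ℝ) :
    ∑ A ∈ s ∪ t, ((a * (if A ∈ s then c A else 0) + b * (if A ∈ t then d A else 0)) * F A)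
      = a * ∑ A ∈ s, c A * F A + b * ∑ A ∈ t, d A * F A := by
  have e1 : ∀ A, ((a * (if A ∈ s then c A else 0) + b * (if A ∈ t then d A else 0)) * F A)
      = (if A ∈ s then a * (c A * F A) else 0) + (if A ∈ t then b * (d A * F A) else 0) := by
    intro A
    by_cases h1 : A ∈ s <;> by_cases h2 : A ∈ t <;> simp [h1, h2] <;> ring
  simp_rw [e1]
  rw [Finset.sum_add_distrib, Finset.sum_ite_mem, Finset.sum_ite_mem,
    Finset.union_inter_cancel_left, Finset.union_inter_cancel_right,
    ← Finset.mul_sum, ← Finset.mul_sum]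

/-- coefficient function for combined representation -/
noncomputable def combc (s t : Finset (Set Ω)) (c d : Set Ω → ℝ) (a b : ℝ) : Set Ω → ℝ :=
  fun A => a * (if A ∈ s then c A else 0) + b * (if A ∈ t then d A else 0)

lemma Rep.comb {s t : Finset (Set Ω)} {c d : Set Ω → ℝ} {u v : Ω → ℝ}
    (h1 : Rep 𝒜 s c u) (h2 : Rep 𝒜 t d v) (a b : ℝ) :
    Rep 𝒜 (s ∪ t) (combc s t c d a b) (fun ω => a * u ω + b * v ω) := by
  constructor
  · intro A hA
    rcases Finset.mem_union.mp hA with h | h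
    · exact h1.1 A h
    · exact h2.1 A h
  · intro ω
    show a * u ω + b * v ω = _
    rw [h1.2 ω, h2.2 ω, ← sum_comb s t c d a b (fun A => A.indicator (fun _ => (1:ℝ)) ω)]
    rfl

lemma intg_comb (s t : Finset (Set Ω)) (c d : Set Ω → ℝ) (a b : ℝ) :
    intg l (s ∪ t) (combc s t c d a b) = a * intg l s c + b * intg l t d := by
  simp only [intg, combc]
  rw [← sum_comb s t c d a b l]

lemma rep_single {E : Set Ω} (hE : E ∈ 𝒜) (r : ℝ) :
    Rep 𝒜 {E} (fun _ => r) (fun ω => r * E.indicator (fun _ => (1:ℝ)) ω) := by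
  refine ⟨fun A hA => ?_, fun ω => ?_⟩
  · rwa [Finset.mem_singleton.mp hA]
  · simp

lemma intg_single {E : Set Ω} (r : ℝ) : intg l {E} (fun _ => r) = r * l E := by
  simp [intg]

section Meas

lemma l_empty (hl : FA.FAMeasure 𝒜 l) : l ∅ = 0 := hl.2.2.1
lemma l_nonneg (hl : FA.FAMeasure 𝒜 l) {X : Set Ω} (hX : X ∈ 𝒜) : 0 ≤ l X := hl.2.1 X hX

lemma l_mono (hl : FA.FAMeasure 𝒜 l) {X Y : Set Ω} (hX : X ∈ 𝒜) (hY : Y ∈ 𝒜) (h : X ⊆ Y) : l X ≤ l Y := by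
  have hd : Disjoint X (Y \ X) := Set.disjoint_sdiff_right
  have := hl.2.2.2 X hX (Y \ X) (hl.1.sdiff_mem hY hX) hd
  rw [Set.union_diff_cancel h] at this
  have h0 := l_nonneg hl (hl.1.sdiff_mem hY hX)
  linarith

lemma l_subadd (hl : FA.FAMeasure 𝒜 l) {X Y : Set Ω} (hX : X ∈ 𝒜) (hY : Y ∈ 𝒜) : l (X ∪ Y) ≤ l X + l Y := by
  have hd : Disjoint X (Y \ X) := Set.disjoint_sdiff_right
  have h1 := hl.2.2.2 X hX (Y \ X) (hl.1.sdiff_mem hY hX) hd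
  rw [Set.union_diff_self] at h1
  have h2 := l_mono hl (hl.1.sdiff_mem hY hX) hY (Set.diff_subset)
  linarith

lemma l_finadd (hl : FA.FAMeasure 𝒜 l) {ι : Type*} (t : Finset ι) (E : ι → Set Ω)
    (hE : ∀ i ∈ t, E i ∈ 𝒜)
    (hd : ∀ i ∈ t, ∀ j ∈ t, i ≠ j → Disjoint (E i) (E j)) :
    l (⋃ i ∈ t, E i) = ∑ i ∈ t, l (E i) := by
  induction t using Finset.induction_on with
  | empty => simpa using hl.2.2.1
  | @insert a t' ha ih =>
    rw [Finset.set_biUnion_insert, Finset.sum_insert ha]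
    have hmem : (⋃ i ∈ t', E i) ∈ 𝒜 :=
      hl.1.biUnion_mem t' (fun i hi => hE i (Finset.mem_insert_of_mem hi))
    have hdisj : Disjoint (E a) (⋃ i ∈ t', E i) := by
      simp only [Set.disjoint_iUnion_right]
      intro i hi
      exact hd a (Finset.mem_insert_self a t') i (Finset.mem_insert_of_mem hi)
        (fun h => ha (h ▸ hi))
    rw [hl.2.2.2 (E a) (hE a (Finset.mem_insert_self a t')) _ hmem hdisj,
      ih (fun i hi => hE i (Finset.mem_insert_of_mem hi))
        (fun i hi j hj hij => hd i (Finset.mem_insert_of_mem hi) j (Finset.mem_insert_of_mem hj) hij)]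

end Meas

/-! ### Atoms -/

def atomOf (s T : Finset (Set Ω)) : Set Ω := (⋂ A ∈ T, A) \ (⋃ A ∈ (s \ T), A)

lemma mem_atomOf {s T : Finset (Set Ω)} {ω : Ω} :
    ω ∈ atomOf s T ↔ (∀ A ∈ T, ω ∈ A) ∧ ∀ A ∈ s, A ∉ T → ω ∉ A := by
  simp [atomOf, Finset.mem_sdiff]

lemma filter_eq_of_mem_atomOf {s T : Finset (Set Ω)} (hT : T ⊆ s) {ω : Ω}
    (h : ω ∈ atomOf s T) : s.filter (ω ∈ ·) = T := by
  rw [mem_atomOf] at h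
  ext A
  simp only [Finset.mem_filter]
  constructor
  · rintro ⟨hAs, hωA⟩
    by_contra hAT
    exact h.2 A hAs hAT hωA
  · intro hAT
    exact ⟨hT hAT, h.1 A hAT⟩

lemma mem_atom_filter (s : Finset (Set Ω)) (ω : Ω) :
    ω ∈ atomOf s (s.filter (ω ∈ ·)) := by
  rw [mem_atomOf]
  constructor
  · intro A hA
    exact (Finset.mem_filter.mp hA).2
  · intro A hAs hAT hωA
    exact hAT (Finset.mem_filter.mpr ⟨hAs, hωA⟩)

lemma atom_disjoint {s T T' : Finset (Set Ω)} (hT : T ⊆ s) (hT' : T' ⊆ s)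
    (hne : T ≠ T') : Disjoint (atomOf s T) (atomOf s T') := by
  rw [Set.disjoint_left]
  intro ω h h'
  exact hne ((filter_eq_of_mem_atomOf hT h).symm.trans (filter_eq_of_mem_atomOf hT' h'))

lemma atom_mem (hring : IsSetRing 𝒜) {s T : Finset (Set Ω)} (hs : ∀ A ∈ s, A ∈ 𝒜)
    (hT : T ⊆ s) (hne : T.Nonempty) : atomOf s T ∈ 𝒜 :=
  hring.sdiff_mem (hring.biInter_mem T hne (fun A hA => hs A (hT hA)))
    (hring.biUnion_mem _ (fun A hA => hs A (Finset.mem_sdiff.mp hA).1))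

lemma Rep.eval {s : Finset (Set Ω)} {c : Set Ω → ℝ} {u : Ω → ℝ}
    (h1 : Rep 𝒜 s c u) (ω : Ω) : u ω = ∑ A ∈ s.filter (ω ∈ ·), c A := by
  rw [h1.2 ω, eval_filter]

lemma l_atom_decomp (hl : FA.FAMeasure 𝒜 l) {s : Finset (Set Ω)} (hs : ∀ A ∈ s, A ∈ 𝒜)
    {A : Set Ω} (hA : A ∈ s) :
    l A = ∑ T ∈ s.powerset.filter (A ∈ ·), l (atomOf s T) := by
  have hA2 : l A = l (⋃ T ∈ s.powerset.filter (A ∈ ·), atomOf s T) := by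
    congr 1
    ext ω
    simp only [Set.mem_iUnion, Finset.mem_filter, Finset.mem_powerset, exists_prop]
    constructor
    · intro hω
      exact ⟨s.filter (ω ∈ ·), ⟨Finset.filter_subset _ _,
        Finset.mem_filter.mpr ⟨hA, hω⟩⟩, mem_atom_filter s ω⟩
    · rintro ⟨T, ⟨hTs, hAT⟩, hω⟩
      exact (mem_atomOf.mp hω).1 A hAT
  rw [hA2, l_finadd hl _ _ ?_ ?_]
  · intro T hT
    have hT' := Finset.mem_filter.mp hT
    exact atom_mem hl.1 hs (Finset.mem_powerset.mp hT'.1) ⟨A, hT'.2⟩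
  · intro T hT T' hT' hne
    exact atom_disjoint (Finset.mem_powerset.mp (Finset.mem_filter.mp hT).1)
      (Finset.mem_powerset.mp (Finset.mem_filter.mp hT').1) hne

lemma intg_atom (hl : FA.FAMeasure 𝒜 l) {s : Finset (Set Ω)} {c : Set Ω → ℝ}
    (hs : ∀ A ∈ s, A ∈ 𝒜) :
    intg l s c = ∑ T ∈ s.powerset, (∑ A ∈ T, c A) * l (atomOf s T) := by
  rw [intg]
  calc ∑ A ∈ s, c A * l A
      = ∑ A ∈ s, ∑ T ∈ s.powerset, (if A ∈ T then c A * l (atomOf s T) else 0) := by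
        refine Finset.sum_congr rfl fun A hA => ?_
        rw [l_atom_decomp hl hs hA, Finset.mul_sum, ← Finset.sum_filter]
    _ = ∑ T ∈ s.powerset, ∑ A ∈ s, (if A ∈ T then c A * l (atomOf s T) else 0) :=
        Finset.sum_comm
    _ = ∑ T ∈ s.powerset, (∑ A ∈ T, c A) * l (atomOf s T) := by
        refine Finset.sum_congr rfl fun T hT => ?_
        rw [← Finset.sum_filter, Finset.filter_mem_eq_inter,
          Finset.inter_eq_right.mpr (Finset.mem_powerset.mp hT), Finset.sum_mul]

lemma key (hl : FA.FAMeasure 𝒜 l) {s : Finset (Set Ω)} {c : Set Ω → ℝ} {u : Ω → ℝ}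
    (hrep : Rep 𝒜 s c u) (hu : ∀ ω, 0 ≤ u ω) : 0 ≤ intg l s c := by
  rw [intg_atom hl hrep.1]
  apply Finset.sum_nonneg
  intro T hT
  by_cases hTe : T = ∅
  · simp [hTe]
  by_cases hne : (atomOf s T).Nonempty
  · obtain ⟨ω, hω⟩ := hne
    have hfil := filter_eq_of_mem_atomOf (Finset.mem_powerset.mp hT) hω
    have hval : u ω = ∑ A ∈ T, c A := by rw [hrep.eval ω, hfil]
    refine mul_nonneg (by rw [← hval]; exact hu ω) (l_nonneg hl ?_)
    exact atom_mem hl.1 hrep.1 (Finset.mem_powerset.mp hT)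
      (Finset.nonempty_iff_ne_empty.mpr hTe)
  · simp [Set.not_nonempty_iff_eq_empty.mp hne, hl.2.2.1]

lemma intg_mono (hl : FA.FAMeasure 𝒜 l) {s t : Finset (Set Ω)} {c d : Set Ω → ℝ}
    {u v : Ω → ℝ} (h1 : Rep 𝒜 s c u) (h2 : Rep 𝒜 t d v) (huv : ∀ ω, u ω ≤ v ω) :
    intg l s c ≤ intg l t d := by
  have h3 := h2.comb h1 1 (-1)
  have hk := key hl h3 (fun ω => by have := huv ω; show (0:ℝ) ≤ 1 * v ω + -1 * u ω; linarith)
  rw [intg_comb] at hk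
  linarith

lemma sublevel_mem (hl : FA.FAMeasure 𝒜 l) {s : Finset (Set Ω)} {c : Set Ω → ℝ} {u : Ω → ℝ}
    (h1 : Rep 𝒜 s c u) {r : ℝ} (hr : 0 ≤ r) : {ω | r < u ω} ∈ 𝒜 := by
  have hset : {ω | r < u ω}
      = ⋃ T ∈ s.powerset.filter (fun T => r < ∑ A ∈ T, c A), atomOf s T := by
    ext ω
    simp only [Set.mem_setOf_eq, Set.mem_iUnion, Finset.mem_filter, Finset.mem_powerset,
      exists_prop]
    constructor
    · intro h
      refine ⟨s.filter (ω ∈ ·), ⟨Finset.filter_subset _ _, ?_⟩, mem_atom_filter s ω⟩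
      rw [← h1.eval ω]; exact h
    · rintro ⟨T, ⟨hTs, hTv⟩, hω⟩
      have hfil := filter_eq_of_mem_atomOf hTs hω
      rw [h1.eval ω, hfil]; exact hTv
  rw [hset]
  refine hl.1.biUnion_mem _ (fun T hT => ?_)
  have hT' := Finset.mem_filter.mp hT
  refine atom_mem hl.1 h1.1 (Finset.mem_powerset.mp hT'.1) ?_
  rw [Finset.nonempty_iff_ne_empty]
  intro he
  rw [he] at hT'
  simp only [Finset.sum_empty] at hT'
  linarith [hT'.2]

/-! ### Outer and inner measure lemmas -/

lemma outer_le {E A' : Set Ω} (hA : A' ∈ 𝒜) (hsub : E ⊆ A') :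
    FA.outer 𝒜 l E ≤ ENNReal.ofReal (l A') :=
  iInf_le_of_le A' (iInf_le_of_le hA (iInf_le_of_le hsub le_rfl))

lemma exists_cover {E : Set Ω} {x : ℝ≥0∞} (h : FA.outer 𝒜 l E < x) :
    ∃ D ∈ 𝒜, E ⊆ D ∧ ENNReal.ofReal (l D) < x := by
  simp only [FA.outer, iInf_lt_iff] at h
  obtain ⟨D, hD, hsub, hlt⟩ := h
  exact ⟨D, hD, hsub, hlt⟩

lemma le_inner {C B : Set Ω} (hC : C ∈ 𝒜) (hsub : C ⊆ B) :
    ENNReal.ofReal (l C) ≤ FA.inner 𝒜 l B :=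
  le_iSup_of_le C (le_iSup_of_le hC (le_iSup_of_le hsub le_rfl))

lemma rep_abs_le {s : Finset (Set Ω)} {c : Set Ω → ℝ} {u : Ω → ℝ}
    (h1 : Rep 𝒜 s c u) (ω : Ω) : |u ω| ≤ ∑ A ∈ s, |c A| := by
  rw [h1.eval ω]
  exact (Finset.abs_sum_le_sum_abs _ _).trans
    (Finset.sum_le_sum_of_subset_of_nonneg (Finset.filter_subset _ _)
      (fun _ _ _ => abs_nonneg _))

lemma rep_zero_off {s : Finset (Set Ω)} {c : Set Ω → ℝ} {u : Ω → ℝ}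
    (h1 : Rep 𝒜 s c u) {ω : Ω} (h : ω ∉ ⋃ A ∈ s, A) : u ω = 0 := by
  rw [h1.eval ω]
  have : s.filter (ω ∈ ·) = ∅ := by
    rw [Finset.filter_eq_empty_iff]
    intro A hA hωA
    exact h (Set.mem_biUnion hA hωA)
  rw [this, Finset.sum_empty]

/-! ### The main estimate for a fixed `ε` -/

lemma main_eps {𝒜 : Set (Set Ω)} {l : Set Ω → ℝ}
    (hl : FA.FAMeasure 𝒜 l) {A B : Set Ω} {f : Ω → ℝ} {I : ℝ} {g : ℕ → Ω → ℝ} {J : ℕ → ℝ}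
    (hAf : ∀ ω, A.indicator (fun _ => (1 : ℝ)) ω ≤ f ω)
    (hfB : ∀ ω, f ω ≤ B.indicator (fun _ => (1 : ℝ)) ω)
    (hconv : FA.ConvInMeasure 𝒜 l g f) (hCau : FA.CauchyL1 𝒜 l g)
    (hJ : ∀ n, FA.SimpleIntegralEq 𝒜 l (g n) (J n)) (hJlim : Tendsto J atTop (nhds I))
    {ε : ℝ} (hε : 0 < ε) (hε5 : ε ≤ 1/5) :
    FA.outer 𝒜 l A ≤ ENNReal.ofReal ((I + 5*ε)/(1 - 2*ε) + 2*ε) ∧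
      ENNReal.ofReal (I - 5*ε) ≤ FA.inner 𝒜 l B := by
  have hf0 : ∀ ω, 0 ≤ f ω := fun ω =>
    le_trans (Set.indicator_nonneg (fun _ _ => zero_le_one) ω) (hAf ω)
  have hf1 : ∀ ω, f ω ≤ 1 := by
    intro ω
    refine le_trans (hfB ω) ?_
    by_cases hωB : ω ∈ B <;> simp [hωB]
  -- coarse stage
  obtain ⟨m₁, hm₁⟩ := hCau ε hε
  obtain ⟨s₁, c₁, hs₁, hφrep', hJ₁⟩ := hJ m₁
  have hφrep : Rep 𝒜 s₁ c₁ (g m₁) := ⟨hs₁, hφrep'⟩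
  set S : Set Ω := ⋃ A ∈ s₁, A with hSdef
  have hSmem : S ∈ 𝒜 := hl.1.biUnion_mem _ hs₁
  have hL0 : 0 ≤ l S := l_nonneg hl hSmem
  set M : ℝ := ∑ A ∈ s₁, |c₁ A| with hMdef
  have hM0 : 0 ≤ M := Finset.sum_nonneg (fun _ _ => abs_nonneg _)
  have hφbd : ∀ ω, |g m₁ ω| ≤ M := fun ω => rep_abs_le hφrep ω
  have hφS : ∀ ω, ω ∉ S → g m₁ ω = 0 := fun ω h => rep_zero_off hφrep h
  set δ : ℝ := ε / (l S + 1) with hδdef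
  have hδ0 : 0 < δ := div_pos hε (by linarith)
  have hδε : δ ≤ ε := div_le_self hε.le (by linarith)
  have hδL : δ * l S ≤ ε := by
    have h1 : δ * (l S + 1) = ε := div_mul_cancel₀ _ (by linarith)
    have h2 : δ * (l S + 1) = δ * l S + δ := by ring
    linarith
  set η : ℝ := ε * δ / (4 * (M + 1)) with hηdef
  have hη0 : 0 < η := div_pos (mul_pos hε hδ0) (by linarith)
  have hηε : η ≤ ε := by
    rw [div_le_iff₀ (by linarith : (0:ℝ) < 4*(M+1))]
    nlinarith
  -- fine stage
  obtain ⟨N₂, hN₂⟩ := hCau η hη0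
  set m₂ : ℕ := max m₁ N₂ with hm₂def
  obtain ⟨s₂, c₂, hs₂, hψrep', hJ₂⟩ := hJ m₂
  have hψrep : Rep 𝒜 s₂ c₂ (g m₂) := ⟨hs₂, hψrep'⟩
  -- the integral of `g m₂` is close to `I`
  have hIJ : |I - J m₂| ≤ η := by
    have hub : ∀ n ≥ m₂, J n ≤ J m₂ + η ∧ J m₂ - η ≤ J n := by
      intro n hn
      obtain ⟨V, ⟨s₃, c₃, hs₃, hVrep', hVval⟩, hVlt⟩ :=
        hN₂ n (le_trans (le_max_right _ _) hn) m₂ (le_max_right _ _)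
      obtain ⟨s₄, c₄, hs₄, hnrep', hJn⟩ := hJ n
      have hrepn : Rep 𝒜 s₄ c₄ (g n) := ⟨hs₄, hnrep'⟩
      have hrepV : Rep 𝒜 s₃ c₃ (fun ω => |g n ω - g m₂ ω|) := ⟨hs₃, hVrep'⟩
      have h1 := intg_mono hl (hrepn.comb hψrep 1 (-1)) hrepV
        (fun ω => by
          show 1 * g n ω + -1 * g m₂ ω ≤ |g n ω - g m₂ ω|
          have := le_abs_self (g n ω - g m₂ ω); linarith)
      have h2 := intg_mono hl (hψrep.comb hrepn 1 (-1)) hrepV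
        (fun ω => by
          show 1 * g m₂ ω + -1 * g n ω ≤ |g n ω - g m₂ ω|
          have := neg_abs_le (g n ω - g m₂ ω); linarith)
      rw [intg_comb] at h1 h2
      have e4 : intg l s₄ c₄ = J n := hJn.symm
      have e2 : intg l s₂ c₂ = J m₂ := hJ₂.symm
      have e3 : intg l s₃ c₃ = V := hVval.symm
      rw [e4, e2, e3] at h1
      rw [e2, e4, e3] at h2
      constructor <;> linarith
    have hI1 : I ≤ J m₂ + η :=
      le_of_tendsto hJlim (eventually_atTop.mpr ⟨m₂, fun n hn => (hub n hn).1⟩)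
    have hI2 : J m₂ - η ≤ I :=
      ge_of_tendsto hJlim (eventually_atTop.mpr ⟨m₂, fun n hn => (hub n hn).2⟩)
    rw [abs_le]; constructor <;> linarith
  -- choose `n`
  set κ : ℝ := ε / (M + 1) with hκdef
  have hκ0 : 0 < κ := div_pos hε (by linarith)
  have hκ1 : κ * (M + 1) = ε := div_mul_cancel₀ _ (by linarith)
  have hκε : κ ≤ ε := div_le_self hε.le (by linarith)
  have hev : ∀ᶠ n in atTop,
      FA.outer 𝒜 l {ω | δ/4 < |g n ω - f ω|} < ENNReal.ofReal κ :=
    (hconv (δ/4) (by positivity)).eventually_lt_const (ENNReal.ofReal_pos.mpr hκ0)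
  obtain ⟨n, hn1, hn2⟩ := (hev.and (eventually_ge_atTop m₂)).exists
  obtain ⟨V, ⟨s₃, c₃, hs₃, hurep', hVval⟩, hVlt⟩ :=
    hN₂ n (le_trans (le_max_right _ _) hn2) m₂ (le_max_right _ _)
  have hurep : Rep 𝒜 s₃ c₃ (fun ω => |g n ω - g m₂ ω|) := ⟨hs₃, hurep'⟩
  obtain ⟨D, hDmem, hDsub, hDlt⟩ := exists_cover hn1
  have hlD : l D < κ := (ENNReal.ofReal_lt_ofReal_iff hκ0).mp hDlt
  -- the exceptional set `G`
  set E₂ : Set Ω := {ω | δ/4 < |g n ω - g m₂ ω|} with hE₂def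
  have hE₂mem : E₂ ∈ 𝒜 := sublevel_mem hl hurep (by positivity)
  have hE₂l : δ/4 * l E₂ ≤ V := by
    have hm := intg_mono hl (rep_single hE₂mem (δ/4)) hurep
      (fun ω => by
        show δ/4 * E₂.indicator (fun _ => (1:ℝ)) ω ≤ |g n ω - g m₂ ω|
        by_cases hω : ω ∈ E₂
        · rw [Set.indicator_of_mem hω, mul_one]; exact le_of_lt hω
        · rw [Set.indicator_of_notMem hω, mul_zero]; exact abs_nonneg _)
    rw [intg_single] at hm
    have e3 : intg l s₃ c₃ = V := hVval.symm
    rwa [e3] at hm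
  have hlE₂ : l E₂ < κ := by
    have hηeq : η = δ/4 * κ := by
      have h1 : (M:ℝ) + 1 ≠ 0 := by linarith
      rw [hηdef, hκdef]
      field_simp
    have h4 : δ/4 * l E₂ < δ/4 * κ := by rw [← hηeq]; exact lt_of_le_of_lt hE₂l hVlt
    exact lt_of_mul_lt_mul_left h4 (by positivity)
  set G : Set Ω := E₂ ∪ D with hGdef
  have hGmem : G ∈ 𝒜 := hl.1.union_mem hE₂mem hDmem
  have hlG : l G ≤ 2*κ := by
    have := l_subadd hl hE₂mem hDmem
    linarith
  have hlG2ε : l G ≤ 2*ε := by linarith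
  have hMlG : M * l G ≤ 2*ε := by
    have h1 : M * l G ≤ M * (2*κ) := mul_le_mul_of_nonneg_left hlG hM0
    nlinarith [hκ0.le]
  -- off `G`, both `g n` is close to `g m₂` and to `f`
  have hoffG : ∀ ω, ω ∉ G → |g n ω - g m₂ ω| ≤ δ/4 ∧ |g n ω - f ω| ≤ δ/4 := by
    intro ω hωG
    constructor
    · exact le_of_not_gt fun hlt => hωG (Or.inl hlt)
    · exact le_of_not_gt fun hlt => hωG (Or.inr (hDsub hlt))
  -- the coarse Cauchy bound
  obtain ⟨W, ⟨s₀, c₀, hs₀, hwrep', hWval⟩, hWlt⟩ := hm₁ m₂ (le_max_left _ _) m₁ le_rfl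
  have hwrep : Rep 𝒜 s₀ c₀ (fun ω => |g m₂ ω - g m₁ ω|) := ⟨hs₀, hwrep'⟩
  -- the main sets
  set C : Set Ω := {ω | 1 - 2*ε < g m₂ ω} with hCdef
  have hCmem : C ∈ 𝒜 := sublevel_mem hl hψrep (by linarith)
  set C₂ : Set Ω := {ω | δ < g m₂ ω} \ G with hC₂def
  have hC₂mem : C₂ ∈ 𝒜 := hl.1.sdiff_mem (sublevel_mem hl hψrep hδ0.le) hGmem
  -- nonnegativity facts for indicators
  have hiS : ∀ ω, (0:ℝ) ≤ S.indicator (fun _ => (1:ℝ)) ω :=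
    fun ω => Set.indicator_nonneg (fun _ _ => zero_le_one) ω
  have hiG : ∀ ω, (0:ℝ) ≤ G.indicator (fun _ => (1:ℝ)) ω :=
    fun ω => Set.indicator_nonneg (fun _ _ => zero_le_one) ω
  have hiC₂ : ∀ ω, (0:ℝ) ≤ C₂.indicator (fun _ => (1:ℝ)) ω :=
    fun ω => Set.indicator_nonneg (fun _ _ => zero_le_one) ω
  -- pointwise inequality 1
  have hpt1 : ∀ ω, (1-2*ε) * C.indicator (fun _ => (1:ℝ)) ω ≤
      g m₂ ω + (δ * S.indicator (fun _ => (1:ℝ)) ω +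
        (|g m₂ ω - g m₁ ω| + M * G.indicator (fun _ => (1:ℝ)) ω)) := by
    intro ω
    have habs : (0:ℝ) ≤ |g m₂ ω - g m₁ ω| := abs_nonneg _
    have hMiG : 0 ≤ M * G.indicator (fun _ => (1:ℝ)) ω := mul_nonneg hM0 (hiG ω)
    have hdS : 0 ≤ δ * S.indicator (fun _ => (1:ℝ)) ω := mul_nonneg hδ0.le (hiS ω)
    by_cases hωC : ω ∈ C
    · rw [Set.indicator_of_mem hωC, mul_one]
      have hlt : 1 - 2*ε < g m₂ ω := hωC
      linarith
    · rw [Set.indicator_of_notMem hωC, mul_zero]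
      by_cases hωS : ω ∈ S
      · rw [Set.indicator_of_mem hωS, mul_one]
        by_cases hx : -δ ≤ g m₂ ω
        · linarith
        · have hωG : ω ∈ G := by
            by_contra hG
            obtain ⟨e1, e2⟩ := hoffG ω hG
            have hf0' := hf0 ω
            have he1 := abs_le.mp e1
            have he2 := abs_le.mp e2
            linarith [he1.1, he1.2, he2.1, he2.2]
          rw [Set.indicator_of_mem hωG, mul_one]
          have h1 := abs_le.mp (hφbd ω)
          have h2 : g m₁ ω - g m₂ ω ≤ |g m₂ ω - g m₁ ω| := by
            rw [abs_sub_comm]; exact le_abs_self _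
          linarith [h1.1, h1.2]
      · rw [hφS ω hωS, sub_zero]
        have := neg_abs_le (g m₂ ω)
        linarith
  -- pointwise inequality 2
  have hpt2 : ∀ ω, g m₂ ω ≤ C₂.indicator (fun _ => (1:ℝ)) ω +
      (δ * S.indicator (fun _ => (1:ℝ)) ω +
        (|g m₂ ω - g m₁ ω| + M * G.indicator (fun _ => (1:ℝ)) ω)) := by
    intro ω
    have habs : (0:ℝ) ≤ |g m₂ ω - g m₁ ω| := abs_nonneg _
    have hMiG : 0 ≤ M * G.indicator (fun _ => (1:ℝ)) ω := mul_nonneg hM0 (hiG ω)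
    have hdS : 0 ≤ δ * S.indicator (fun _ => (1:ℝ)) ω := mul_nonneg hδ0.le (hiS ω)
    by_cases hωG : ω ∈ G
    · rw [Set.indicator_of_mem hωG, mul_one]
      by_cases hωS : ω ∈ S
      · have h1 : g m₁ ω ≤ M := le_trans (le_abs_self _) (hφbd ω)
        have h2 : g m₂ ω - g m₁ ω ≤ |g m₂ ω - g m₁ ω| := le_abs_self _
        linarith [hiC₂ ω]
      · have h3 : g m₂ ω ≤ |g m₂ ω - g m₁ ω| := by
          rw [hφS ω hωS, sub_zero]; exact le_abs_self _
        linarith [hiC₂ ω]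
    · by_cases hxδ : g m₂ ω ≤ δ
      · by_cases hωS : ω ∈ S
        · rw [Set.indicator_of_mem hωS, mul_one]
          linarith [hiC₂ ω, hMiG]
        · have h3 : g m₂ ω ≤ |g m₂ ω - g m₁ ω| := by
            rw [hφS ω hωS, sub_zero]; exact le_abs_self _
          linarith [hiC₂ ω]
      · have hωC₂ : ω ∈ C₂ := ⟨not_le.mp hxδ, hωG⟩
        rw [Set.indicator_of_mem hωC₂]
        obtain ⟨e1, e2⟩ := hoffG ω hωG
        have hfb := hf1 ω
        have he1 := abs_le.mp e1
        have he2 := abs_le.mp e2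
        by_cases hωS : ω ∈ S
        · rw [Set.indicator_of_mem hωS, mul_one]
          linarith [he1.1, he1.2, he2.1, he2.2]
        · have h3 : g m₂ ω ≤ |g m₂ ω - g m₁ ω| := by
            rw [hφS ω hωS, sub_zero]; exact le_abs_self _
          linarith
  -- integral inequality 1
  have hineq1 : (1-2*ε) * l C ≤ J m₂ + (δ * l S + (W + M * l G)) := by
    have hmono := intg_mono hl (rep_single hCmem (1-2*ε))
      (hψrep.comb ((rep_single hSmem δ).comb
        (hwrep.comb (rep_single hGmem M) 1 1) 1 1) 1 1)
      (fun ω => by simpa using hpt1 ω)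
    rw [intg_comb, intg_comb, intg_comb, intg_single, intg_single, intg_single] at hmono
    have e2 : intg l s₂ c₂ = J m₂ := hJ₂.symm
    have e0 : intg l s₀ c₀ = W := hWval.symm
    rw [e2, e0] at hmono
    linarith
  -- integral inequality 2
  have hineq2 : J m₂ ≤ l C₂ + (δ * l S + (W + M * l G)) := by
    have hmono := intg_mono hl hψrep
      ((rep_single hC₂mem 1).comb ((rep_single hSmem δ).comb
        (hwrep.comb (rep_single hGmem M) 1 1) 1 1) 1 1)
      (fun ω => by simpa using hpt2 ω)
    rw [intg_comb, intg_comb, intg_comb, intg_single, intg_single, intg_single] at hmono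
    have e2 : intg l s₂ c₂ = J m₂ := hJ₂.symm
    have e0 : intg l s₀ c₀ = W := hWval.symm
    rw [e2, e0] at hmono
    linarith
  have hIJ' := abs_le.mp hIJ
  constructor
  · -- outer measure bound
    have hcov : A ⊆ C ∪ G := by
      intro ω hωA
      by_cases hωG : ω ∈ G
      · exact Or.inr hωG
      · left
        obtain ⟨e1, e2⟩ := hoffG ω hωG
        have hfA : (1:ℝ) ≤ f ω := by
          have := hAf ω; rwa [Set.indicator_of_mem hωA] at this
        have he1 := abs_le.mp e1
        have he2 := abs_le.mp e2
        show 1 - 2*ε < g m₂ ω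
        linarith [he1.1, he1.2, he2.1, he2.2]
    have hlC : l C ≤ (I + 5*ε)/(1-2*ε) := by
      rw [le_div_iff₀ (by linarith : (0:ℝ) < 1-2*ε), mul_comm]
      linarith [hIJ'.1, hIJ'.2]
    refine le_trans (outer_le (hl.1.union_mem hCmem hGmem) hcov)
      (ENNReal.ofReal_le_ofReal ?_)
    have := l_subadd hl hCmem hGmem
    linarith
  · -- inner measure bound
    have hC₂B : C₂ ⊆ B := by
      intro ω hω
      obtain ⟨hδx, hωG⟩ := hω
      obtain ⟨e1, e2⟩ := hoffG ω hωG
      by_contra hωB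
      have hfB' : f ω ≤ 0 := by
        have := hfB ω; rwa [Set.indicator_of_notMem hωB] at this
      have he1 := abs_le.mp e1
      have he2 := abs_le.mp e2
      have hδx' : δ < g m₂ ω := hδx
      linarith [he1.1, he1.2, he2.1, he2.2]
    have hlC₂ : I - 5*ε ≤ l C₂ := by linarith [hIJ'.1, hIJ'.2]
    exact le_trans (ENNReal.ofReal_le_ofReal hlC₂) (le_inner hC₂mem hC₂B)

end FAProof

open FA MeasureTheory

/-- If `1_A ≤ f ≤ 1_B` pointwise and `f` is `l`-integrable with integral `I`,
then `l*(A) ≤ I ≤ l_*(B)`. -/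
theorem stmt0 {Ω : Type*} (𝒜 : Set (Set Ω)) (l : Set Ω → ℝ)
    (hl : FAMeasure 𝒜 l) (A B : Set Ω) (f : Ω → ℝ) (I : ℝ)
    (hAf : ∀ ω, A.indicator (fun _ => (1 : ℝ)) ω ≤ f ω)
    (hfB : ∀ ω, f ω ≤ B.indicator (fun _ => (1 : ℝ)) ω)
    (hf : HasIntegral 𝒜 l f I) :
    outer 𝒜 l A ≤ ENNReal.ofReal I ∧ ENNReal.ofReal I ≤ inner 𝒜 l B := by
  obtain ⟨g, J, _hsimp, hconv, hCau, hJ, hJlim⟩ := hf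
  have ht : Tendsto (fun k : ℕ => (1:ℝ)/((k:ℝ)+5)) atTop (nhds 0) := by
    have h5 : Tendsto (fun k : ℕ => (k:ℝ)+5) atTop atTop :=
      tendsto_atTop_add_const_right _ 5 tendsto_natCast_atTop_atTop
    simpa [one_div, Function.comp_def] using tendsto_inv_atTop_zero.comp h5
  have hεk : ∀ k : ℕ, (0:ℝ) < 1/((k:ℝ)+5) := by
    intro k; positivity
  have hεk5 : ∀ k : ℕ, (1:ℝ)/((k:ℝ)+5) ≤ 1/5 := by
    intro k
    rw [div_le_div_iff₀ (by positivity) (by norm_num)]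
    have := Nat.cast_nonneg (α := ℝ) k
    linarith
  constructor
  · have hreal1 : Tendsto (fun k : ℕ =>
        (I + 5*((1:ℝ)/((k:ℝ)+5)))/(1 - 2*((1:ℝ)/((k:ℝ)+5))) + 2*((1:ℝ)/((k:ℝ)+5)))
        atTop (nhds I) := by
      have hnum : Tendsto (fun k : ℕ => I + 5*((1:ℝ)/((k:ℝ)+5))) atTop (nhds (I + 5*0)) :=
        tendsto_const_nhds.add (ht.const_mul 5)
      have hden : Tendsto (fun k : ℕ => 1 - 2*((1:ℝ)/((k:ℝ)+5))) atTop (nhds (1 - 2*0)) :=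
        tendsto_const_nhds.sub (ht.const_mul 2)
      have h := (hnum.div hden (by norm_num)).add (ht.const_mul 2)
      simpa using h
    refine ge_of_tendsto' (ENNReal.tendsto_ofReal hreal1) (fun k => ?_)
    exact (FAProof.main_eps hl hAf hfB hconv hCau hJ hJlim (hεk k) (hεk5 k)).1
  · have hreal2 : Tendsto (fun k : ℕ => I - 5*((1:ℝ)/((k:ℝ)+5))) atTop (nhds I) := by
      have h : Tendsto (fun k : ℕ => I - 5*((1:ℝ)/((k:ℝ)+5))) atTop (nhds (I - 5*0)) :=
        tendsto_const_nhds.sub (ht.const_mul 5)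
      simpa using h
    refine le_of_tendsto' (ENNReal.tendsto_ofReal hreal2) (fun k => ?_)
    exact (FAProof.main_eps hl hAf hfB hconv hCau hJ hJlim (hεk k) (hεk5 k)).2
end

section
/- Let (A, λ) be a finitely additive measure structure on Ω and X : Ω → ℝ with X ≥ 0. If X is λ-measurable, then λ*(X ≥ s + 2η) ≤ λ_*(X > s) + λ*(|X − X_k| ≥ η) + 2^{-k} for suitable approximating simple functions X_k; in particular λ*(X ≥ t) ≤ λ_*(X > s) < ∞ for all 0 < s < t. -/
open scoped ENNReal
open MeasureTheory Filter

namespace FA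

variable {Ω : Type*}

variable {𝒜 : Set (Set Ω)} {l : Set Ω → ℝ}

lemma l_mono (hl : FAMeasure 𝒜 l) {A B : Set Ω} (hA : A ∈ 𝒜) (hB : B ∈ 𝒜) (h : A ⊆ B) :
    l A ≤ l B := by
  have hd : B \ A ∈ 𝒜 := hl.1.sdiff_mem hB hA
  have h2 : l (A ∪ (B \ A)) = l A + l (B \ A) :=
    hl.2.2.2 A hA _ hd disjoint_sdiff_self_right
  rw [Set.union_diff_cancel h] at h2
  have := hl.2.1 _ hd
  linarith

lemma l_union_le (hl : FAMeasure 𝒜 l) {A B : Set Ω} (hA : A ∈ 𝒜) (hB : B ∈ 𝒜) :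
    l (A ∪ B) ≤ l A + l B := by
  have hd : B \ A ∈ 𝒜 := hl.1.sdiff_mem hB hA
  have h2 : l (A ∪ (B \ A)) = l A + l (B \ A) :=
    hl.2.2.2 A hA _ hd disjoint_sdiff_self_right
  rw [Set.union_diff_self] at h2
  have := l_mono hl hd hB Set.diff_subset
  linarith

lemma outer_mono {E F : Set Ω} (h : E ⊆ F) : outer 𝒜 l E ≤ outer 𝒜 l F := by
  refine le_iInf fun A => le_iInf fun hA => le_iInf fun hF => ?_
  exact iInf_le_of_le A (iInf_le_of_le hA (iInf_le_of_le (h.trans hF) le_rfl))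

lemma outer_le {A E : Set Ω} (hA : A ∈ 𝒜) (h : E ⊆ A) :
    outer 𝒜 l E ≤ ENNReal.ofReal (l A) :=
  iInf_le_of_le A (iInf_le_of_le hA (iInf_le_of_le h le_rfl))

lemma le_inner {B E : Set Ω} (hB : B ∈ 𝒜) (h : B ⊆ E) :
    ENNReal.ofReal (l B) ≤ inner 𝒜 l E :=
  le_iSup_of_le B (le_iSup_of_le hB (le_iSup_of_le h le_rfl))

lemma inner_le_outer (hl : FAMeasure 𝒜 l) {E F : Set Ω} (h : E ⊆ F) :
    inner 𝒜 l E ≤ outer 𝒜 l F := by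
  refine iSup_le fun B => iSup_le fun hB => iSup_le fun hBE => ?_
  refine le_iInf fun A => le_iInf fun hA => le_iInf fun hFA => ?_
  exact ENNReal.ofReal_le_ofReal (l_mono hl hB hA ((hBE.trans h).trans hFA))

lemma exists_cover {E : Set Ω} (hE : outer 𝒜 l E ≠ ⊤) {ε : ℝ} (hε : 0 < ε) :
    ∃ A ∈ 𝒜, E ⊆ A ∧ ENNReal.ofReal (l A) ≤ outer 𝒜 l E + ENNReal.ofReal ε := by
  have hlt : outer 𝒜 l E < outer 𝒜 l E + ENNReal.ofReal ε :=
    ENNReal.lt_add_right hE (ENNReal.ofReal_pos.mpr hε).ne'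
  rw [outer, iInf_lt_iff] at hlt
  obtain ⟨A, hA⟩ := hlt
  rw [iInf_lt_iff] at hA
  obtain ⟨hA𝒜, hA⟩ := hA
  rw [iInf_lt_iff] at hA
  obtain ⟨hEA, hA⟩ := hA
  exact ⟨A, hA𝒜, hEA, hA.le⟩

lemma outer_le_add (hl : FAMeasure 𝒜 l) {A E F : Set Ω} (hA : A ∈ 𝒜) (h : E ⊆ A ∪ F) :
    outer 𝒜 l E ≤ ENNReal.ofReal (l A) + outer 𝒜 l F := by
  by_cases hF : outer 𝒜 l F = ⊤
  · simp [hF]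
  refine ENNReal.le_of_forall_pos_le_add fun ε hε hfin => ?_
  obtain ⟨C, hC𝒜, hFC, hlC⟩ := exists_cover (𝒜 := 𝒜) (l := l) hF (by exact_mod_cast hε)
  have h1 : outer 𝒜 l E ≤ ENNReal.ofReal (l (A ∪ C)) :=
    outer_le (hl.1.union_mem hA hC𝒜) (h.trans (Set.union_subset_union_right A hFC))
  refine h1.trans ?_
  have h2 : ENNReal.ofReal (l (A ∪ C)) ≤ ENNReal.ofReal (l A) + ENNReal.ofReal (l C) :=
    (ENNReal.ofReal_le_ofReal (l_union_le hl hA hC𝒜)).trans ENNReal.ofReal_add_le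
  refine h2.trans ?_
  have : (ε : ℝ≥0∞) = ENNReal.ofReal ε := by simp [ENNReal.ofReal_coe_nnreal]
  rw [add_assoc, this]
  exact add_le_add_right hlC _

/-- Level sets of simple functions at positive levels belong to the ring. -/
lemma simple_level (hl : FAMeasure 𝒜 l) {f : Ω → ℝ} (hf : IsSimple 𝒜 f) {r : ℝ} (hr : 0 < r) :
    {ω | r ≤ f ω} ∈ 𝒜 := by
  classical
  obtain ⟨s, c, hc, hrep⟩ := hf
  have key : {ω | r ≤ f ω} =
      ⋃ T ∈ s.powerset.filter (fun T => r ≤ ∑ A ∈ T, c A),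
        ((⋂ A ∈ T, A) \ ⋃ A ∈ s \ T, A) := by
    ext ω
    simp only [Set.mem_setOf_eq, Set.mem_iUnion, Finset.mem_filter, Finset.mem_powerset]
    have hval : f ω = ∑ A ∈ s.filter (fun A => ω ∈ A), c A := by
      rw [hrep ω, Finset.sum_filter]
      refine Finset.sum_congr rfl fun A _ => ?_
      by_cases hω : ω ∈ A <;> simp [Set.indicator, hω]
    constructor
    · intro hrf
      refine ⟨s.filter (fun A => ω ∈ A), ⟨Finset.filter_subset _ _, by rwa [← hval]⟩, ?_, ?_⟩
      · simp only [Set.mem_iInter]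
        intro A hA
        exact (Finset.mem_filter.mp hA).2
      · simp only [Set.mem_iUnion, not_exists]
        intro A hA
        rcases Finset.mem_sdiff.mp hA with ⟨hAs, hAnf⟩
        intro hωA
        exact hAnf (Finset.mem_filter.mpr ⟨hAs, hωA⟩)
    · rintro ⟨T, ⟨hTs, hTr⟩, hin, hout⟩
      simp only [Set.mem_iInter] at hin
      simp only [Set.mem_iUnion, not_exists] at hout
      have hTeq : T = s.filter (fun A => ω ∈ A) := by
        ext A
        simp only [Finset.mem_filter]
        constructor
        · intro hAT; exact ⟨hTs hAT, hin A hAT⟩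
        · rintro ⟨hAs, hωA⟩
          by_contra hAT
          exact hout A (Finset.mem_sdiff.mpr ⟨hAs, hAT⟩) hωA
      rw [hval, ← hTeq]
      exact hTr
  rw [key]
  refine hl.1.biUnion_mem _ fun T hT => ?_
  rcases Finset.mem_filter.mp hT with ⟨hTs, hTr⟩
  rw [Finset.mem_powerset] at hTs
  have hTne : T.Nonempty := by
    rcases T.eq_empty_or_nonempty with h | h
    · exfalso; rw [h] at hTr; simp at hTr; linarith
    · exact h
  exact hl.1.sdiff_mem (hl.1.biInter_mem T hTne fun A hA => hc A (hTs hA))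
    (hl.1.biUnion_mem _ fun A hA => hc A (Finset.mem_sdiff.mp hA).1)

/-- The key inequality. -/
lemma key_ineq (hl : FAMeasure 𝒜 l) {X g : Ω → ℝ} (hg : IsSimple 𝒜 g)
    {s η ε : ℝ} (hs : 0 < s) (hη : 0 < η) (hε : 0 < ε) :
    outer 𝒜 l {ω | s + 2 * η ≤ X ω} ≤
      inner 𝒜 l {ω | s < X ω} + outer 𝒜 l {ω | η ≤ |X ω - g ω|} + ENNReal.ofReal ε := by
  set O := outer 𝒜 l {ω | η ≤ |X ω - g ω|} with hO
  by_cases hOtop : O = ⊤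
  · rw [hOtop]; simp
  obtain ⟨C, hC𝒜, hCcov, hlC⟩ := exists_cover (𝒜 := 𝒜) (l := l) hOtop hε
  have hA𝒜 : {ω | s + η ≤ g ω} ∈ 𝒜 := simple_level hl hg (by linarith)
  set A := {ω | s + η ≤ g ω} with hAdef
  have hB𝒜 : A \ C ∈ 𝒜 := hl.1.sdiff_mem hA𝒜 hC𝒜
  have hBsub : A \ C ⊆ {ω | s < X ω} := by
    rintro ω ⟨hωA, hωC⟩
    have h1 : ¬ η ≤ |X ω - g ω| := fun h => hωC (hCcov h)
    have h2 : |X ω - g ω| < η := lt_of_not_ge h1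
    have := abs_lt.mp h2
    have : s + η ≤ g ω := hωA
    simp only [Set.mem_setOf_eq]
    have := abs_lt.mp h2
    linarith [this.1]
  have hcov : {ω | s + 2 * η ≤ X ω} ⊆ (A \ C) ∪ C := by
    intro ω hω
    by_cases hωC : ω ∈ C
    · exact Or.inr hωC
    · refine Or.inl ⟨?_, hωC⟩
      have h1 : ¬ η ≤ |X ω - g ω| := fun h => hωC (hCcov h)
      have h2 := abs_lt.mp (lt_of_not_ge h1)
      simp only [Set.mem_setOf_eq] at hω
      show s + η ≤ g ω
      linarith [h2.2]
  have hdisj : Disjoint (A \ C) C := disjoint_sdiff_self_left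
  have hunion : l ((A \ C) ∪ C) = l (A \ C) + l C := hl.2.2.2 _ hB𝒜 _ hC𝒜 hdisj
  calc outer 𝒜 l {ω | s + 2 * η ≤ X ω}
      ≤ ENNReal.ofReal (l ((A \ C) ∪ C)) := outer_le (hl.1.union_mem hB𝒜 hC𝒜) hcov
    _ = ENNReal.ofReal (l (A \ C) + l C) := by rw [hunion]
    _ = ENNReal.ofReal (l (A \ C)) + ENNReal.ofReal (l C) :=
        ENNReal.ofReal_add (hl.2.1 _ hB𝒜) (hl.2.1 _ hC𝒜)
    _ ≤ inner 𝒜 l {ω | s < X ω} + (O + ENNReal.ofReal ε) :=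
        add_le_add (le_inner hB𝒜 hBsub) hlC
    _ = inner 𝒜 l {ω | s < X ω} + O + ENNReal.ofReal ε := by rw [add_assoc]


end FA

open FA MeasureTheory

/-- if `X ≥ 0` is `l`-measurable then, for a suitable approximating sequence
of simple functions `g k`, `l*(X ≥ s + 2η) ≤ l_*(X > s) + l*(|X - g k| ≥ η) + 2⁻ᵏ`;
in particular `l*(X ≥ t) ≤ l_*(X > s) < ∞` for all `0 < s < t`. -/
theorem stmt1 {Ω : Type*} (𝒜 : Set (Set Ω)) (l : Set Ω → ℝ)
    (hl : FAMeasure 𝒜 l) (X : Ω → ℝ) (hX : ∀ ω, 0 ≤ X ω)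
    (hmeas : FAMeasurable 𝒜 l X) :
    (∃ g : ℕ → Ω → ℝ, (∀ k, IsSimple 𝒜 (g k)) ∧ ConvInMeasure 𝒜 l g X ∧
      ∀ s η : ℝ, 0 < s → 0 < η → ∀ k : ℕ,
        outer 𝒜 l {ω | s + 2 * η ≤ X ω} ≤
          inner 𝒜 l {ω | s < X ω} + outer 𝒜 l {ω | η ≤ |X ω - g k ω|}
            + ENNReal.ofReal ((2 : ℝ) ^ (-(k : ℤ)))) ∧
    ∀ s t : ℝ, 0 < s → s < t →
      outer 𝒜 l {ω | t ≤ X ω} ≤ inner 𝒜 l {ω | s < X ω} ∧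
      inner 𝒜 l {ω | s < X ω} < ⊤ := by
  obtain ⟨g, hgs, hgc⟩ := hmeas
  have habs : ∀ η : ℝ, 0 < η →
      Tendsto (fun k => outer 𝒜 l {ω | η ≤ |X ω - g k ω|}) atTop (nhds 0) := by
    intro η hη
    have h2 := hgc (η / 2) (by linarith)
    refine tendsto_of_tendsto_of_tendsto_of_le_of_le tendsto_const_nhds h2
      (fun k => zero_le) (fun k => ?_)
    refine outer_mono fun ω hω => ?_
    simp only [Set.mem_setOf_eq] at hω ⊢
    rw [abs_sub_comm]
    linarith
  constructor
  · exact ⟨g, hgs, hgc, fun s η hs hη k =>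
      key_ineq hl (hgs k) hs hη (by positivity)⟩
  · intro s t hs hst
    have hη : 0 < (t - s) / 2 := by linarith
    have h2k : Tendsto (fun k : ℕ => ENNReal.ofReal ((2 : ℝ) ^ (-(k : ℤ)))) atTop (nhds 0) := by
      have hre : Tendsto (fun k : ℕ => (2 : ℝ) ^ (-(k : ℤ))) atTop (nhds 0) := by
        have := tendsto_pow_atTop_nhds_zero_of_lt_one
          (by norm_num : (0:ℝ) ≤ 2⁻¹) (by norm_num : (2:ℝ)⁻¹ < 1)
        refine this.congr fun k => ?_
        rw [zpow_neg, zpow_natCast, inv_pow]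
      have := ENNReal.tendsto_ofReal hre
      simpa using this
    have hmain : ∀ k : ℕ, outer 𝒜 l {ω | t ≤ X ω} ≤
        inner 𝒜 l {ω | s < X ω} + outer 𝒜 l {ω | (t - s) / 2 ≤ |X ω - g k ω|}
          + ENNReal.ofReal ((2 : ℝ) ^ (-(k : ℤ))) := by
      intro k
      have hteq : s + 2 * ((t - s) / 2) = t := by ring
      have hset : {ω | t ≤ X ω} = {ω | s + 2 * ((t - s) / 2) ≤ X ω} := by rw [hteq]
      rw [hset]
      exact key_ineq hl (hgs k) hs hη (by positivity)
    have hlim : Tendsto (fun k : ℕ => inner 𝒜 l {ω | s < X ω}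
        + outer 𝒜 l {ω | (t - s) / 2 ≤ |X ω - g k ω|}
        + ENNReal.ofReal ((2 : ℝ) ^ (-(k : ℤ)))) atTop
        (nhds (inner 𝒜 l {ω | s < X ω} + 0 + 0)) := by
      refine Tendsto.add (Tendsto.add tendsto_const_nhds (habs _ hη)) h2k
    have h1 : outer 𝒜 l {ω | t ≤ X ω} ≤ inner 𝒜 l {ω | s < X ω} := by
      have := ge_of_tendsto hlim (Filter.Eventually.of_forall hmain)
      simpa using this
    refine ⟨h1, ?_⟩
    have hfin : outer 𝒜 l {ω | s ≤ X ω} < ⊤ := by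
      have hev := (hgc (s / 4) (by linarith)).eventually
        (gt_mem_nhds (by norm_num : (0 : ℝ≥0∞) < 1))
      obtain ⟨k, hk⟩ := hev.exists
      have hA : {ω | s / 2 ≤ g k ω} ∈ 𝒜 := simple_level hl (hgs k) (by linarith)
      have hcov : {ω | s ≤ X ω} ⊆ {ω | s / 2 ≤ g k ω} ∪ {ω | s / 4 < |g k ω - X ω|} := by
        intro ω hω
        simp only [Set.mem_setOf_eq] at hω
        by_cases h : s / 4 < |g k ω - X ω|
        · exact Or.inr h
        · refine Or.inl ?_
          have h2 := abs_le.mp (le_of_not_gt h)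
          show s / 2 ≤ g k ω
          linarith [h2.1]
      refine lt_of_le_of_lt (outer_le_add hl hA hcov) ?_
      exact ENNReal.add_lt_top.mpr ⟨ENNReal.ofReal_lt_top, lt_trans hk (by norm_num)⟩
    exact lt_of_le_of_lt (inner_le_outer hl fun ω (hω : s < X ω) => le_of_lt hω) hfin
end

section
/- Let φ : ℝ → ℝ be convex with minimizer x₀ ∈ ℝ satisfying D⁺φ(x₀) = D⁻φ(x₀) = 0, and for u ≤ v define h_u^v(x) = (v − max(x, u))⁺·1_{x > x₀} − (min(v, x) − u)⁺·1_{x ≤ x₀}. Then there exists a countably additive Borel measure ν ≥ 0 on ℝ with ν({x₀}) = 0, each h_u^v ν-integrable, and φ(v) = φ(u) + ∫ h_u^v dν for all v ≥ u. -/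
open MeasureTheory

section StmtAuxSection
open Set Filter Topology


namespace Stmt11Aux

variable {φ : ℝ → ℝ}

/-- The right derivative candidate of a convex function. -/
noncomputable def rd (φ : ℝ → ℝ) (x : ℝ) : ℝ := sInf (slope φ x '' Set.Ioi x)

lemma slope_eq (φ : ℝ → ℝ) (p q : ℝ) : slope φ p q = (φ q - φ p) / (q - p) := by
  rw [slope_def_field, ← neg_sub (φ p) (φ q), ← neg_sub p q, neg_div_neg_eq]

lemma smono (hconv : ConvexOn ℝ Set.univ φ) {a b c : ℝ} (hb : b ≠ a) (hc : c ≠ a)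
    (hbc : b ≤ c) : slope φ a b ≤ slope φ a c := by
  rw [slope_eq, slope_eq]
  exact hconv.secant_mono (mem_univ a) (mem_univ b) (mem_univ c) hb hc hbc

lemma sadj (hconv : ConvexOn ℝ Set.univ φ) {a b c : ℝ} (hab : a < b) (hbc : b < c) :
    slope φ a b ≤ slope φ b c := by
  rw [slope_comm]
  exact smono hconv hab.ne (hbc.ne') (hab.le.trans hbc.le)

lemma bddBelow_slopes (hconv : ConvexOn ℝ Set.univ φ) (x : ℝ) :
    BddBelow (slope φ x '' Set.Ioi x) := by
  refine ⟨slope φ x (x - 1), ?_⟩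
  rintro b ⟨y, hy, rfl⟩
  exact smono hconv (by intro h; linarith) (mem_Ioi.1 hy).ne' (by linarith [mem_Ioi.1 hy])

lemma rd_le_slope (hconv : ConvexOn ℝ Set.univ φ) {x y : ℝ} (hxy : x < y) :
    rd φ x ≤ slope φ x y :=
  csInf_le (bddBelow_slopes hconv x) ⟨y, hxy, rfl⟩

lemma slope_le_rd (hconv : ConvexOn ℝ Set.univ φ) {x y : ℝ} (hyx : y < x) :
    slope φ x y ≤ rd φ x := by
  refine le_csInf ⟨slope φ x (x + 1), ⟨x + 1, by simp, rfl⟩⟩ ?_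
  rintro b ⟨z, hz, rfl⟩
  exact smono hconv hyx.ne (mem_Ioi.1 hz).ne' (by linarith [mem_Ioi.1 hz])

lemma rd_mono (hconv : ConvexOn ℝ Set.univ φ) : Monotone (rd φ) := by
  intro x y hxy
  rcases eq_or_lt_of_le hxy with rfl | hlt
  · exact le_refl _
  calc rd φ x ≤ slope φ x y := rd_le_slope hconv hlt
    _ = slope φ y x := slope_comm φ x y
    _ ≤ rd φ y := slope_le_rd hconv hlt

lemma rd_hasDeriv (hconv : ConvexOn ℝ Set.univ φ) (x : ℝ) :
    HasDerivWithinAt φ (rd φ x) (Set.Ioi x) x := by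
  rw [hasDerivWithinAt_iff_tendsto_slope' (by simp : x ∉ Set.Ioi x)]
  exact MonotoneOn.tendsto_nhdsGT
    (fun a ha b hb hab => smono hconv (mem_Ioi.1 ha).ne' (mem_Ioi.1 hb).ne' hab)
    (bddBelow_slopes hconv x)

lemma tendsto_slope_fst (hconv : ConvexOn ℝ Set.univ φ) {x y : ℝ} (hxy : x ≠ y) :
    Tendsto (fun t => slope φ t y) (𝓝 x) (𝓝 (slope φ x y)) := by
  have hcont : Continuous φ := hconv.locallyLipschitz.continuous
  simp only [slope_eq]
  exact Filter.Tendsto.div (tendsto_const_nhds.sub hcont.continuousAt)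
    (tendsto_const_nhds.sub tendsto_id) (sub_ne_zero.2 (Ne.symm hxy))

lemma tendsto_slope_snd (hconv : ConvexOn ℝ Set.univ φ) {x y : ℝ} (hxy : x ≠ y) :
    Tendsto (fun t => slope φ y t) (𝓝 x) (𝓝 (slope φ y x)) := by
  simp only [fun t => slope_comm φ y t]
  exact tendsto_slope_fst hconv hxy

lemma rd_rightContinuous (hconv : ConvexOn ℝ Set.univ φ) (x : ℝ) :
    ContinuousWithinAt (rd φ) (Set.Ici x) x := by
  rw [← continuousWithinAt_Ioi_iff_Ici]
  have T := (rd_mono hconv).tendsto_nhdsGT x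
  have hbdd : BddBelow (rd φ '' Set.Ioi x) :=
    ⟨rd φ x, by rintro b ⟨z, hz, rfl⟩; exact rd_mono hconv (mem_Ioi.1 hz).le⟩
  have heq : sInf (rd φ '' Set.Ioi x) = rd φ x := by
    refine le_antisymm ?_ ?_
    · refine le_csInf ⟨slope φ x (x+1), ⟨x+1, by simp, rfl⟩⟩ ?_
      rintro b ⟨y, hy, rfl⟩
      have hy' : x < y := mem_Ioi.1 hy
      refine ge_of_tendsto ((tendsto_slope_fst hconv hy'.ne).mono_left (nhdsWithin_le_nhds : 𝓝[Set.Ioi x] x ≤ 𝓝 x)) ?_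
      filter_upwards [Ioo_mem_nhdsGT_of_mem ⟨le_refl x, hy'⟩] with t ht
      calc sInf (rd φ '' Set.Ioi x) ≤ rd φ t := csInf_le hbdd ⟨t, ht.1, rfl⟩
        _ ≤ slope φ t y := rd_le_slope hconv ht.2
    · exact le_csInf ((nonempty_Ioi).image _) (by
        rintro b ⟨y, hy, rfl⟩; exact rd_mono hconv (mem_Ioi.1 hy).le)
  rw [heq] at T
  exact T

end Stmt11Aux

namespace Stmt11Aux2
open Stmt11Aux ENNReal

lemma ofReal_max_zero (c : ℝ) : ENNReal.ofReal (max c 0) = ENNReal.ofReal c := by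
  rcases le_total c 0 with h | h
  · rw [max_eq_right h, ENNReal.ofReal_zero, eq_comm, ENNReal.ofReal_eq_zero]; exact h
  · rw [max_eq_left h]

lemma swap1 (ν : Measure ℝ) [SigmaFinite ν] (x₀ u v : ℝ) :
    ∫⁻ x in Set.Ioi x₀, ENNReal.ofReal (v - max x u) ∂ν
      = ∫⁻ t in Set.Ioc u v, ν (Set.Ioo x₀ t) := by
  have h1 : ∀ x : ℝ, ENNReal.ofReal (v - max x u)
      = ∫⁻ t, (Set.Ioc u v ∩ Set.Ioi x).indicator (fun _ => (1:ℝ≥0∞)) t := by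
    intro x
    rw [show (Set.Ioc u v ∩ Set.Ioi x) = Set.Ioc (max x u) v by
      rw [Set.Ioc_inter_Ioi, max_comm u x]]
    rw [← Real.volume_Ioc (a := max x u) (b := v)]
    exact (lintegral_indicator_one measurableSet_Ioc).symm
  simp_rw [h1]
  rw [lintegral_lintegral_swap]
  · have h2 : ∀ t : ℝ,
        (∫⁻ x in Set.Ioi x₀, (Set.Ioc u v ∩ Set.Ioi x).indicator (fun _ => (1:ℝ≥0∞)) t ∂ν)
        = (Set.Ioc u v).indicator (fun t => ν (Set.Ioo x₀ t)) t := by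
      intro t
      by_cases ht : t ∈ Set.Ioc u v
      · rw [Set.indicator_of_mem ht]
        have hx : ∀ x : ℝ, (Set.Ioc u v ∩ Set.Ioi x).indicator (fun _ => (1:ℝ≥0∞)) t
            = (Set.Iio t).indicator (fun _ => (1:ℝ≥0∞)) x := by
          intro x
          by_cases hxt : x < t
          · simp [Set.indicator_apply, Set.mem_inter_iff, ht.1, ht.2, hxt]
          · simp [Set.indicator_apply, Set.mem_inter_iff, hxt]
        simp_rw [hx]
        rw [lintegral_indicator measurableSet_Iio]
        rw [setLIntegral_one, Measure.restrict_apply measurableSet_Iio, Set.Iio_inter_Ioi]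
      · rw [Set.indicator_of_notMem ht]
        have hx : ∀ x : ℝ, (Set.Ioc u v ∩ Set.Ioi x).indicator (fun _ => (1:ℝ≥0∞)) t = 0 :=
          fun x => Set.indicator_of_notMem (fun hmem => ht hmem.1) _
        simp_rw [hx, lintegral_zero]
    simp_rw [h2]
    rw [lintegral_indicator measurableSet_Ioc]
  · have hset : MeasurableSet {p : ℝ × ℝ | (u < p.2 ∧ p.2 ≤ v) ∧ p.1 < p.2} :=
      ((measurableSet_lt measurable_const measurable_snd).inter
        (measurableSet_le measurable_snd measurable_const)).inter
        (measurableSet_lt measurable_fst measurable_snd)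
    have heq : Function.uncurry
        (fun x t => (Set.Ioc u v ∩ Set.Ioi x).indicator (fun _ => (1:ℝ≥0∞)) t)
        = {p : ℝ × ℝ | (u < p.2 ∧ p.2 ≤ v) ∧ p.1 < p.2}.indicator (fun _ => 1) := by
      ext ⟨x, t⟩
      simp only [Function.uncurry, Set.indicator_apply, Set.mem_inter_iff, Set.mem_Ioc,
        Set.mem_Ioi, Set.mem_setOf_eq]
    rw [heq]
    exact (measurable_const.indicator hset).aemeasurable

lemma swap2 (ν : Measure ℝ) [SigmaFinite ν] (x₀ u v : ℝ) :
    ∫⁻ x in Set.Iic x₀, ENNReal.ofReal (min v x - u) ∂ν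
      = ∫⁻ t in Set.Ioc u v, ν (Set.Icc t x₀) := by
  have h1 : ∀ x : ℝ, ENNReal.ofReal (min v x - u)
      = ∫⁻ t, (Set.Ioc u v ∩ Set.Iic x).indicator (fun _ => (1:ℝ≥0∞)) t := by
    intro x
    rw [show (Set.Ioc u v ∩ Set.Iic x) = Set.Ioc u (min v x) from Set.Ioc_inter_Iic u v x]
    rw [← Real.volume_Ioc (a := u) (b := min v x)]
    exact (lintegral_indicator_one measurableSet_Ioc).symm
  simp_rw [h1]
  rw [lintegral_lintegral_swap]
  · have h2 : ∀ t : ℝ,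
        (∫⁻ x in Set.Iic x₀, (Set.Ioc u v ∩ Set.Iic x).indicator (fun _ => (1:ℝ≥0∞)) t ∂ν)
        = (Set.Ioc u v).indicator (fun t => ν (Set.Icc t x₀)) t := by
      intro t
      by_cases ht : t ∈ Set.Ioc u v
      · rw [Set.indicator_of_mem ht]
        have hx : ∀ x : ℝ, (Set.Ioc u v ∩ Set.Iic x).indicator (fun _ => (1:ℝ≥0∞)) t
            = (Set.Ici t).indicator (fun _ => (1:ℝ≥0∞)) x := by
          intro x
          by_cases hxt : t ≤ x
          · simp [Set.indicator_apply, Set.mem_inter_iff, ht.1, ht.2, hxt]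
          · simp [Set.indicator_apply, Set.mem_inter_iff, hxt]
        simp_rw [hx]
        rw [lintegral_indicator measurableSet_Ici]
        rw [setLIntegral_one, Measure.restrict_apply measurableSet_Ici, Set.Ici_inter_Iic]
      · rw [Set.indicator_of_notMem ht]
        have hx : ∀ x : ℝ, (Set.Ioc u v ∩ Set.Iic x).indicator (fun _ => (1:ℝ≥0∞)) t = 0 :=
          fun x => Set.indicator_of_notMem (fun hmem => ht hmem.1) _
        simp_rw [hx, lintegral_zero]
    simp_rw [h2]
    rw [lintegral_indicator measurableSet_Ioc]
  · have hset : MeasurableSet {p : ℝ × ℝ | (u < p.2 ∧ p.2 ≤ v) ∧ p.2 ≤ p.1} :=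
      ((measurableSet_lt measurable_const measurable_snd).inter
        (measurableSet_le measurable_snd measurable_const)).inter
        (measurableSet_le measurable_snd measurable_fst)
    have heq : Function.uncurry
        (fun x t => (Set.Ioc u v ∩ Set.Iic x).indicator (fun _ => (1:ℝ≥0∞)) t)
        = {p : ℝ × ℝ | (u < p.2 ∧ p.2 ≤ v) ∧ p.2 ≤ p.1}.indicator (fun _ => 1) := by
      ext ⟨x, t⟩
      simp only [Function.uncurry, Set.indicator_apply, Set.mem_inter_iff, Set.mem_Ioc,
        Set.mem_Iic, Set.mem_setOf_eq]
    rw [heq]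
    exact (measurable_const.indicator hset).aemeasurable

end Stmt11Aux2

namespace Stmt11Aux

lemma rd_x0 (hconv : ConvexOn ℝ Set.univ φ) {x₀ : ℝ}
    (hDplus : HasDerivWithinAt φ 0 (Set.Ioi x₀) x₀) : rd φ x₀ = 0 :=
  tendsto_nhds_unique
    ((hasDerivWithinAt_iff_tendsto_slope' (by simp : x₀ ∉ Set.Ioi x₀)).1 (rd_hasDeriv hconv x₀))
    ((hasDerivWithinAt_iff_tendsto_slope' (by simp : x₀ ∉ Set.Ioi x₀)).1 hDplus)

lemma leftLim_rd_x0 (hconv : ConvexOn ℝ Set.univ φ) {x₀ : ℝ} (hmin : ∀ x, φ x₀ ≤ φ x)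
    (hDminus : HasDerivWithinAt φ 0 (Set.Iio x₀) x₀) :
    Function.leftLim (rd φ) x₀ = 0 := by
  refine le_antisymm ?_ ?_
  · refine le_of_tendsto ((rd_mono hconv).tendsto_leftLim x₀) ?_
    filter_upwards [self_mem_nhdsWithin] with t ht
    have ht' : t < x₀ := ht
    calc rd φ t ≤ slope φ t x₀ := rd_le_slope hconv ht'
      _ ≤ 0 := by
          rw [slope_eq]
          apply div_nonpos_of_nonpos_of_nonneg
          · linarith [hmin t]
          · linarith
  · have hd := (hasDerivWithinAt_iff_tendsto_slope'
      (by simp : x₀ ∉ Set.Iio x₀)).1 hDminus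
    refine le_of_tendsto hd ?_
    filter_upwards [self_mem_nhdsWithin] with s hs
    have hs' : s < x₀ := hs
    rw [slope_comm]
    refine le_of_tendsto ((tendsto_slope_snd hconv (x := x₀) (y := s) hs'.ne').mono_left
      (nhdsWithin_le_nhds : 𝓝[Set.Iio x₀] x₀ ≤ 𝓝 x₀)) ?_
    filter_upwards [Ioo_mem_nhdsLT_of_mem (show x₀ ∈ Set.Ioc s x₀ from ⟨hs', le_refl x₀⟩)]
      with t ht
    calc slope φ s t = slope φ t s := slope_comm φ s t
      _ ≤ rd φ t := slope_le_rd hconv ht.1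
      _ ≤ Function.leftLim (rd φ) x₀ := (rd_mono hconv).le_leftLim ht.2

end Stmt11Aux


end StmtAuxSection

open Stmt11Aux

/-- The kernel `h_u^v(x) = (v − x∨u)⁺·1_{x > x₀} − (v∧x − u)⁺·1_{x ≤ x₀}`. -/
noncomputable def huv (x₀ u v x : ℝ) : ℝ :=
  (Set.Ioi x₀).indicator (fun y => max (v - max y u) 0) x -
    (Set.Iic x₀).indicator (fun y => max (min v y - u) 0) x

/-- a convex `φ` with minimizer `x₀` and vanishing one-sided derivatives
at `x₀` admits a countably additive Borel representation
`φ(v) = φ(u) + ∫ h_u^v dν` with `ν ≥ 0`, `ν({x₀}) = 0`. -/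
theorem stmt11 (φ : ℝ → ℝ) (hconv : ConvexOn ℝ Set.univ φ)
    (x₀ : ℝ) (hmin : ∀ x, φ x₀ ≤ φ x)
    (hDplus : HasDerivWithinAt φ 0 (Set.Ioi x₀) x₀)
    (hDminus : HasDerivWithinAt φ 0 (Set.Iio x₀) x₀) :
    ∃ ν : Measure ℝ, ν {x₀} = 0 ∧
      (∀ u v : ℝ, u ≤ v → Integrable (huv x₀ u v) ν) ∧
      ∀ u v : ℝ, u ≤ v → φ v = φ u + ∫ x, huv x₀ u v x ∂ν := by
  classical
  have hcont : Continuous φ := hconv.locallyLipschitz.continuous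
  have hgmono : Monotone (rd φ) := rd_mono hconv
  let F : StieltjesFunction ℝ := ⟨rd φ, hgmono, rd_rightContinuous hconv⟩
  have hFfun : (F : ℝ → ℝ) = rd φ := rfl
  have hg0 : rd φ x₀ = 0 := rd_x0 hconv hDplus
  have hL0 : Function.leftLim (rd φ) x₀ = 0 := leftLim_rd_x0 hconv hmin hDminus
  have hLmono : Monotone (Function.leftLim (rd φ)) := hgmono.leftLim
  have hmeas1 : ∀ u v : ℝ, Measurable fun y : ℝ => max (v - max y u) 0 := fun u v =>
    (measurable_const.sub (measurable_id.max measurable_const)).max measurable_const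
  have hmeas2 : ∀ u v : ℝ, Measurable fun y : ℝ => max (min v y - u) 0 := fun u v =>
    ((measurable_const.min measurable_id).sub measurable_const).max measurable_const
  have hint1 : ∀ u v : ℝ, u ≤ v →
      Integrable ((Set.Ioi x₀).indicator fun y : ℝ => max (v - max y u) 0) F.measure := by
    intro u v huv'
    refine Integrable.mono' (g := (Set.Icc (min u x₀) (max v x₀)).indicator fun _ : ℝ => v - u)
      ?_ (((hmeas1 u v).indicator measurableSet_Ioi).aestronglyMeasurable) (ae_of_all _ ?_)
    · rw [integrable_indicator_iff measurableSet_Icc]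
      exact integrableOn_const isCompact_Icc.measure_lt_top.ne
    · intro x
      rw [Real.norm_eq_abs]
      by_cases hx : x ∈ Set.Ioi x₀
      · rw [Set.indicator_of_mem hx, abs_of_nonneg (le_max_right _ _)]
        have hx' : x₀ < x := hx
        by_cases hx2 : x ∈ Set.Icc (min u x₀) (max v x₀)
        · rw [Set.indicator_of_mem hx2]
          exact max_le (by linarith [le_max_right x u]) (by linarith)
        · rw [Set.indicator_of_notMem hx2]
          simp only [Set.mem_Icc, not_and_or, not_le] at hx2
          rcases hx2 with h | h
          · exact absurd hx' (by linarith [min_le_right u x₀])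
          · have hv : v < x := lt_of_le_of_lt (le_max_left v x₀) h
            exact max_le (by linarith [le_max_left x u]) le_rfl
      · rw [Set.indicator_of_notMem hx, abs_zero]
        exact Set.indicator_nonneg (fun _ _ => by linarith) x
  have hint2 : ∀ u v : ℝ, u ≤ v →
      Integrable ((Set.Iic x₀).indicator fun y : ℝ => max (min v y - u) 0) F.measure := by
    intro u v huv'
    refine Integrable.mono' (g := (Set.Icc (min u x₀) (max v x₀)).indicator fun _ : ℝ => v - u)
      ?_ (((hmeas2 u v).indicator measurableSet_Iic).aestronglyMeasurable) (ae_of_all _ ?_)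
    · rw [integrable_indicator_iff measurableSet_Icc]
      exact integrableOn_const isCompact_Icc.measure_lt_top.ne
    · intro x
      rw [Real.norm_eq_abs]
      by_cases hx : x ∈ Set.Iic x₀
      · rw [Set.indicator_of_mem hx, abs_of_nonneg (le_max_right _ _)]
        have hx' : x ≤ x₀ := hx
        by_cases hx2 : x ∈ Set.Icc (min u x₀) (max v x₀)
        · rw [Set.indicator_of_mem hx2]
          exact max_le (by linarith [min_le_left v x]) (by linarith)
        · rw [Set.indicator_of_notMem hx2]
          simp only [Set.mem_Icc, not_and_or, not_le] at hx2
          rcases hx2 with h | h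
          · have hxu : x < u := lt_of_lt_of_le h (min_le_left u x₀)
            exact max_le (by linarith [min_le_right v x]) le_rfl
          · exact absurd hx' (by linarith [le_max_right v x₀])
      · rw [Set.indicator_of_notMem hx, abs_zero]
        exact Set.indicator_nonneg (fun _ _ => by linarith) x
  refine ⟨F.measure, ?_, ?_, ?_⟩
  · rw [F.measure_singleton]
    rw [show (F : ℝ → ℝ) x₀ = 0 from hg0,
      show Function.leftLim (F : ℝ → ℝ) x₀ = 0 from hL0, sub_zero, ENNReal.ofReal_zero]
  · intro u v huv'
    exact (hint1 u v huv').sub (hint2 u v huv')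
  · intro u v huv'
    have hFTC : ∫ t in Set.Ioc u v, rd φ t = φ v - φ u := by
      rw [← intervalIntegral.integral_of_le huv']
      exact intervalIntegral.integral_eq_sub_of_hasDeriv_right_of_le huv' hcont.continuousOn
        (fun t _ => rd_hasDeriv hconv t) hgmono.intervalIntegrable
    have hLg : (fun t => Function.leftLim (rd φ) t)
        =ᵐ[volume.restrict (Set.Ioc u v)] rd φ := by
      apply ae_restrict_of_ae
      have hsub : {t : ℝ | Function.leftLim (rd φ) t ≠ rd φ t}
          ⊆ {t : ℝ | ¬ ContinuousAt (rd φ) t} := by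
        intro t ht hc
        exact ht (hgmono.continuousWithinAt_Iio_iff_leftLim_eq.1 hc.continuousWithinAt)
      have hnull : volume {t : ℝ | Function.leftLim (rd φ) t ≠ rd φ t} = 0 :=
        measure_mono_null hsub (hgmono.countable_not_continuousAt.measure_zero _)
      exact ae_iff.mpr hnull
    have hLint : IntegrableOn (Function.leftLim (rd φ)) (Set.Ioc u v) volume :=
      ((hLmono.monotoneOn _).integrableOn_isCompact isCompact_Icc).mono_set
        Set.Ioc_subset_Icc_self
    have hA : ∫ x, (Set.Ioi x₀).indicator (fun y : ℝ => max (v - max y u) 0) x ∂F.measure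
        = ∫ t in Set.Ioc u v, max (Function.leftLim (rd φ) t) 0 := by
      rw [integral_indicator measurableSet_Ioi]
      rw [integral_eq_lintegral_of_nonneg_ae (μ := F.measure.restrict (Set.Ioi x₀))
        (f := fun x : ℝ => max (v - max x u) 0)
        (ae_of_all _ fun x => le_max_right _ _) ((hmeas1 u v).aestronglyMeasurable)]
      have e1 : ∫⁻ x in Set.Ioi x₀, ENNReal.ofReal (max (v - max x u) 0) ∂F.measure
          = ∫⁻ x in Set.Ioi x₀, ENNReal.ofReal (v - max x u) ∂F.measure :=
        lintegral_congr fun x => Stmt11Aux2.ofReal_max_zero _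
      rw [e1, Stmt11Aux2.swap1 F.measure x₀ u v]
      have e2 : ∫⁻ t in Set.Ioc u v, F.measure (Set.Ioo x₀ t)
          = ∫⁻ t in Set.Ioc u v,
              ENNReal.ofReal (max (Function.leftLim (rd φ) t) 0) := by
        refine setLIntegral_congr_fun measurableSet_Ioc (fun t _ => ?_)
        rw [F.measure_Ioo, Stmt11Aux2.ofReal_max_zero]
        congr 1
        show Function.leftLim (rd φ) t - rd φ x₀ = Function.leftLim (rd φ) t
        rw [hg0, sub_zero]
      rw [e2]
      rw [← integral_eq_lintegral_of_nonneg_ae (μ := volume.restrict (Set.Ioc u v))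
        (f := fun t : ℝ => max (Function.leftLim (rd φ) t) 0)
        (ae_of_all _ fun t => le_max_right _ _)
        ((hLmono.measurable.max measurable_const).aestronglyMeasurable)]
    have hB : ∫ x, (Set.Iic x₀).indicator (fun y : ℝ => max (min v y - u) 0) x ∂F.measure
        = ∫ t in Set.Ioc u v, max (-(Function.leftLim (rd φ) t)) 0 := by
      rw [integral_indicator measurableSet_Iic]
      rw [integral_eq_lintegral_of_nonneg_ae (μ := F.measure.restrict (Set.Iic x₀))
        (f := fun x : ℝ => max (min v x - u) 0)
        (ae_of_all _ fun x => le_max_right _ _) ((hmeas2 u v).aestronglyMeasurable)]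
      have e1 : ∫⁻ x in Set.Iic x₀, ENNReal.ofReal (max (min v x - u) 0) ∂F.measure
          = ∫⁻ x in Set.Iic x₀, ENNReal.ofReal (min v x - u) ∂F.measure :=
        lintegral_congr fun x => Stmt11Aux2.ofReal_max_zero _
      rw [e1, Stmt11Aux2.swap2 F.measure x₀ u v]
      have e2 : ∫⁻ t in Set.Ioc u v, F.measure (Set.Icc t x₀)
          = ∫⁻ t in Set.Ioc u v,
              ENNReal.ofReal (max (-(Function.leftLim (rd φ) t)) 0) := by
        refine setLIntegral_congr_fun measurableSet_Ioc (fun t _ => ?_)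
        rw [F.measure_Icc, Stmt11Aux2.ofReal_max_zero]
        congr 1
        show rd φ x₀ - Function.leftLim (rd φ) t = -(Function.leftLim (rd φ) t)
        rw [hg0, zero_sub]
      rw [e2]
      rw [← integral_eq_lintegral_of_nonneg_ae (μ := volume.restrict (Set.Ioc u v))
        (f := fun t : ℝ => max (-(Function.leftLim (rd φ) t)) 0)
        (ae_of_all _ fun t => le_max_right _ _)
        (((hLmono.measurable.neg.max measurable_const)).aestronglyMeasurable)]
    have hsplit : ∫ x, huv x₀ u v x ∂F.measure
        = (∫ x, (Set.Ioi x₀).indicator (fun y : ℝ => max (v - max y u) 0) x ∂F.measure)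
          - ∫ x, (Set.Iic x₀).indicator (fun y : ℝ => max (min v y - u) 0) x ∂F.measure :=
      integral_sub (hint1 u v huv') (hint2 u v huv')
    have hID : (∫ t in Set.Ioc u v, max (Function.leftLim (rd φ) t) 0)
        - (∫ t in Set.Ioc u v, max (-(Function.leftLim (rd φ) t)) 0)
        = ∫ t in Set.Ioc u v, Function.leftLim (rd φ) t := by
      rw [← integral_sub hLint.pos_part hLint.neg_part]
      simp only [max_zero_sub_max_neg_zero_eq_self]
    have hlast : ∫ t in Set.Ioc u v, Function.leftLim (rd φ) t
        = ∫ t in Set.Ioc u v, rd φ t := integral_congr_ae hLg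
    rw [hsplit, hA, hB, hID, hlast, hFTC]
    ring
end

section
/- Let u ≤ v be reals, x₀ ∈ ℝ, and define h_u^v(x) = (v − max(x, u))⁺·1_{x > x₀} − (min(v, x) − u)⁺·1_{x ≤ x₀}. Suppose ν is a nonnegative countably additive Borel measure on ℝ such that each h_u^v is ν-integrable and φ(v) = φ(u) + ∫ h_u^v dν for all v ≥ u. Then φ is convex on ℝ; moreover, if u < v and ν((u, v)) = 0, then D⁻φ(v) ≤ D⁺φ(u). -/
open MeasureTheory

/-- Pointwise convexity of `v ↦ huv x₀ u v x` on `[u, ∞)`. -/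
lemma huv_convex_pt (x₀ u a b t s x : ℝ) (hua : u ≤ a) (hub : u ≤ b)
    (ht : 0 ≤ t) (hs : 0 ≤ s) (hts : t + s = 1) :
    huv x₀ u (t * a + s * b) x ≤ t * huv x₀ u a x + s * huv x₀ u b x := by
  unfold huv
  by_cases hx : x₀ < x
  · have hx' : ¬ x ≤ x₀ := not_le.mpr hx
    simp only [Set.indicator_apply, Set.mem_Ioi, Set.mem_Iic, hx, hx', if_true, if_false]
    set m := max x u with hm
    have h1 : a - m ≤ max (a - m) 0 := le_max_left _ _
    have h2 : b - m ≤ max (b - m) 0 := le_max_left _ _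
    have h3 : (0:ℝ) ≤ max (a - m) 0 := le_max_right _ _
    have h4 : (0:ℝ) ≤ max (b - m) 0 := le_max_right _ _
    have : max (t * a + s * b - m) 0 ≤ t * max (a - m) 0 + s * max (b - m) 0 := by
      apply max_le
      · have hm' : t * m + s * m = m := by rw [← add_mul, hts, one_mul]
        nlinarith [mul_le_mul_of_nonneg_left h1 ht, mul_le_mul_of_nonneg_left h2 hs]
      · nlinarith [mul_le_mul_of_nonneg_left h3 ht, mul_le_mul_of_nonneg_left h4 hs]
    linarith
  · have hx' : x ≤ x₀ := not_lt.mp hx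
    simp only [Set.indicator_apply, Set.mem_Ioi, Set.mem_Iic, hx, hx', if_true, if_false]
    have hc : u ≤ t * a + s * b := by
      have hm' : t * u + s * u = u := by rw [← add_mul, hts, one_mul]
      nlinarith [mul_le_mul_of_nonneg_left hua ht, mul_le_mul_of_nonneg_left hub hs]
    rcases le_total x u with hxu | hxu
    · 
      have e1 : min a x = x := min_eq_right (hxu.trans hua)
      have e2 : min b x = x := min_eq_right (hxu.trans hub)
      have e3 : min (t * a + s * b) x = x := min_eq_right (hxu.trans hc)
      rw [e1, e2, e3]
      have e4 : max (x - u) 0 = 0 := max_eq_right (by linarith)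
      rw [e4]
      norm_num
    · -- u ≤ x
      have hma : u ≤ min a x := le_min hua hxu
      have hmb : u ≤ min b x := le_min hub hxu
      have hmc : u ≤ min (t * a + s * b) x := le_min hc hxu
      have e1 : max (min a x - u) 0 = min a x - u := max_eq_left (by linarith)
      have e2 : max (min b x - u) 0 = min b x - u := max_eq_left (by linarith)
      have e3 : max (min (t * a + s * b) x - u) 0 = min (t * a + s * b) x - u :=
        max_eq_left (by linarith)
      rw [e1, e2, e3]
      have h5 : t * min a x + s * min b x ≤ min (t * a + s * b) x := by
        apply le_min
        · nlinarith [mul_le_mul_of_nonneg_left (min_le_left a x) ht,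
            mul_le_mul_of_nonneg_left (min_le_left b x) hs]
        · have hxx : t * x + s * x = x := by rw [← add_mul, hts, one_mul]
          nlinarith [mul_le_mul_of_nonneg_left (min_le_right a x) ht,
            mul_le_mul_of_nonneg_left (min_le_right b x) hs]
      have hus : t * u + s * u = u := by rw [← add_mul, hts, one_mul]
      linarith

/-- Off `(u,v)`, `huv x₀ u w` is proportional to `huv x₀ u v`. -/
lemma huv_prop (x₀ u v w x : ℝ) (huv' : u < v) (huw : u ≤ w) (hwv : w ≤ v)
    (hx : x ∉ Set.Ioo u v) :
    huv x₀ u w x = ((w - u) / (v - u)) * huv x₀ u v x := by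
  have hvu : v - u ≠ 0 := by linarith
  have hx' : x ≤ u ∨ v ≤ x := by
    rcases lt_or_ge u x with h | h
    · right; by_contra hc; exact hx ⟨h, not_le.mp hc⟩
    · left; exact h
  unfold huv
  rcases hx' with h | h
  · have e1 : max x u = u := max_eq_right h
    have e2 : min w x = x := min_eq_right (h.trans huw)
    have e3 : min v x = x := min_eq_right (h.trans huv'.le)
    have e4 : max (x - u) 0 = 0 := max_eq_right (by linarith)
    have e5 : max (w - u) 0 = w - u := max_eq_left (by linarith)
    have e6 : max (v - u) 0 = v - u := max_eq_left (by linarith)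
    simp only [Set.indicator_apply, Set.mem_Ioi, Set.mem_Iic, e1, e2, e3, e4, e5, e6]
    split_ifs <;> field_simp <;> ring
  · have e1 : max x u = x := max_eq_left (huv'.le.trans h)
    have e2 : min w x = w := min_eq_left (hwv.trans h)
    have e3 : min v x = v := min_eq_left h
    have e4 : max (w - x) 0 = 0 := max_eq_right (by linarith)
    have e5 : max (v - x) 0 = 0 := max_eq_right (by linarith)
    have e6 : max (w - u) 0 = w - u := max_eq_left (by linarith)
    have e7 : max (v - u) 0 = v - u := max_eq_left (by linarith)
    simp only [Set.indicator_apply, Set.mem_Ioi, Set.mem_Iic, e1, e2, e3, e4, e5, e6, e7]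
    split_ifs <;> field_simp <;> ring

/-- if `φ(v) = φ(u) + ∫ h_u^v dν` for all `u ≤ v` for a nonnegative
countably additive Borel measure `ν`, then `φ` is convex; moreover `u < v` and
`ν((u,v)) = 0` imply `D⁻φ(v) ≤ D⁺φ(u)`. -/
theorem stmt12 (φ : ℝ → ℝ) (x₀ : ℝ) (ν : Measure ℝ)
    (hint : ∀ u v : ℝ, u ≤ v → Integrable (huv x₀ u v) ν)
    (hrep : ∀ u v : ℝ, u ≤ v → φ v = φ u + ∫ x, huv x₀ u v x ∂ν) :
    ConvexOn ℝ Set.univ φ ∧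
      ∀ u v : ℝ, u < v → ν (Set.Ioo u v) = 0 →
        derivWithin φ (Set.Iio v) v ≤ derivWithin φ (Set.Ioi u) u := by
  constructor
  · refine ⟨convex_univ, fun a _ b _ t s ht hs hts => ?_⟩
    set u := min a b with hu
    have hua : u ≤ a := min_le_left a b
    have hub : u ≤ b := min_le_right a b
    have huc : u ≤ t * a + s * b := by
      have hm' : t * u + s * u = u := by rw [← add_mul, hts, one_mul]
      nlinarith [mul_le_mul_of_nonneg_left hua ht, mul_le_mul_of_nonneg_left hub hs]
    have hInt_a := hint u a hua
    have hInt_b := hint u b hub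
    have hInt_c := hint u _ huc
    have key : ∫ x, huv x₀ u (t * a + s * b) x ∂ν ≤
        t * (∫ x, huv x₀ u a x ∂ν) + s * (∫ x, huv x₀ u b x ∂ν) := by
      rw [← integral_const_mul, ← integral_const_mul, ← integral_add
        (hInt_a.const_mul t) (hInt_b.const_mul s)]
      refine integral_mono hInt_c ((hInt_a.const_mul t).add (hInt_b.const_mul s)) ?_
      intro x
      exact huv_convex_pt x₀ u a b t s x hua hub ht hs hts
    have ha := hrep u a hua
    have hb := hrep u b hub
    have hc := hrep u _ huc
    have hus : t * φ u + s * φ u = φ u := by rw [← add_mul, hts, one_mul]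
    simp only [smul_eq_mul]
    rw [hc, ha, hb]
    nlinarith [key, hus]
  · intro u v huv' hν
    set c : ℝ → ℝ := fun w => (w - u) / (v - u) with hc
    have hvu : (0:ℝ) < v - u := by linarith
    set σ : ℝ := (φ v - φ u) / (v - u) with hσ
    have key : ∀ w, u ≤ w → w ≤ v → φ w = φ u + σ * (w - u) := by
      intro w huw hwv
      have hae : (huv x₀ u w) =ᵐ[ν] fun x => ((w - u) / (v - u)) * huv x₀ u v x := by
        rw [Filter.EventuallyEq, ae_iff]
        refine measure_mono_null ?_ hν
        intro x hx
        simp only [Set.mem_setOf_eq] at hx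
        by_contra hmem
        exact hx (huv_prop x₀ u v w x huv' huw hwv hmem)
      have h1 : ∫ x, huv x₀ u w x ∂ν = ((w - u) / (v - u)) * ∫ x, huv x₀ u v x ∂ν := by
        rw [integral_congr_ae hae, integral_const_mul]
      have h2 := hrep u w huw
      have h3 := hrep u v huv'.le
      have h4 : ∫ x, huv x₀ u v x ∂ν = φ v - φ u := by linarith
      rw [h1, h4] at h2
      rw [h2, hσ]
      ring
    have hline : ∀ y : ℝ, HasDerivAt (fun z => φ u + σ * (z - u)) σ y := by
      intro y
      simpa using (((hasDerivAt_id y).sub_const u).const_mul σ).const_add (φ u)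
    have hd1 : HasDerivWithinAt φ σ (Set.Ioo u v) u := by
      refine ((hline u).hasDerivWithinAt).congr ?_ ?_
      · intro y hy
        exact key y hy.1.le hy.2.le
      · linarith [key u le_rfl huv'.le]
    have hd2 : HasDerivWithinAt φ σ (Set.Ioo u v) v := by
      refine ((hline v).hasDerivWithinAt).congr ?_ ?_
      · intro y hy
        exact key y hy.1.le hy.2.le
      · simpa using key v huv'.le le_rfl
    have hD1 : derivWithin φ (Set.Ioi u) u = σ :=
      (hd1.mono_of_mem_nhdsWithin (Ioo_mem_nhdsGT huv')).derivWithin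
        (uniqueDiffWithinAt_Ioi u)
    have hD2 : derivWithin φ (Set.Iio v) v = σ :=
      (hd2.mono_of_mem_nhdsWithin (Ioo_mem_nhdsLT huv')).derivWithin
        (uniqueDiffWithinAt_Iio v)
    rw [hD1, hD2]
end

section
/- Let S be a separable topological space, S₀ a countable dense subset, and H : (0,1) → S the Borel function H = ι ∘ G onto S₀ as above. Let U : Ω → ℝ be any function whose range has closure equal to [0,1], and set X' = H ∘ U. Then for every continuous h : S → ℝ with inf-negativity witness, i.e. whenever {h < 0} is a nonempty open subset of S, there exists ω ∈ Ω with h(X'(ω)) < 0. -/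
/-- `G(x) = min {n ∈ ℕ : 1 − 2⁻ⁿ ≥ x}`. -/
noncomputable def Gfun (x : ℝ) : ℕ := sInf {n : ℕ | x ≤ 1 - (2 : ℝ) ^ (-(n : ℤ))}

lemma Gfun_eq {n : ℕ} {x : ℝ}
    (h1 : 1 - (2:ℝ) ^ (-(n:ℤ) + 1) < x) (h2 : x ≤ 1 - (2:ℝ) ^ (-(n:ℤ))) : Gfun x = n := by
  have hne : n ∈ {m : ℕ | x ≤ 1 - (2:ℝ) ^ (-(m:ℤ))} := h2
  refine le_antisymm (Nat.sInf_le hne) (le_csInf ⟨n, hne⟩ ?_)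
  intro m hm
  by_contra hlt
  push_neg at hlt
  have h3 : (2:ℝ) ^ (-(n:ℤ) + 1) ≤ 2 ^ (-(m:ℤ)) := by
    apply zpow_le_zpow_right₀ one_le_two; omega
  have hm' : x ≤ 1 - (2:ℝ) ^ (-(m:ℤ)) := hm
  linarith

/-- with `S₀ = ι[{n ≥ 1}]` dense in `S`, `H = ι ∘ G`, and `U : Ω → ℝ`
whose range has closure `[0,1]`, the composition `X' = H ∘ U` satisfies the
conglomerability property: whenever `{h < 0}` is open (h continuous) and nonempty,
some `ω` has `h(X'(ω)) < 0`. -/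
theorem stmt14 {S : Type*} [TopologicalSpace S] (ι : ℕ → S)
    (hdense : Dense (ι '' {n : ℕ | 1 ≤ n}))
    {Ω : Type*} (U : Ω → ℝ) (hU : closure (Set.range U) = Set.Icc (0 : ℝ) 1) :
    ∀ h : S → ℝ, Continuous h → (∃ s, h s < 0) →
      ∃ ω : Ω, h (ι (Gfun (U ω))) < 0 := by
  intro h hc ⟨s, hs⟩
  have hopen : IsOpen {t : S | h t < 0} := isOpen_lt hc continuous_const
  obtain ⟨p, hp1, hp2⟩ := hdense.exists_mem_open hopen ⟨s, hs⟩
  obtain ⟨n, hn1, rfl⟩ := hp1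
  have hn1' : 1 ≤ n := hn1
  set a : ℝ := 1 - (2:ℝ) ^ (-(n:ℤ) + 1) with ha
  set b : ℝ := 1 - (2:ℝ) ^ (-(n:ℤ)) with hb
  have hab : a < b := by
    have : (2:ℝ) ^ (-(n:ℤ)) < 2 ^ (-(n:ℤ) + 1) :=
      zpow_lt_zpow_right₀ one_lt_two (by omega)
    simp only [ha, hb]; linarith
  have ha0 : 0 ≤ a := by
    have : (2:ℝ) ^ (-(n:ℤ) + 1) ≤ 2 ^ (0:ℤ) :=
      zpow_le_zpow_right₀ one_le_two (by omega)
    simp only [ha]; simp only [zpow_zero] at this; linarith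
  have hb1 : b ≤ 1 := by
    have : (0:ℝ) < 2 ^ (-(n:ℤ)) := by positivity
    simp only [hb]; linarith
  have hx0 : (a + b) / 2 ∈ closure (Set.range U) := by
    rw [hU]; constructor <;> [linarith; linarith]
  rw [mem_closure_iff] at hx0
  obtain ⟨y, hy, ⟨ω, rfl⟩⟩ := hx0 (Set.Ioo a b) isOpen_Ioo (by constructor <;> [linarith; linarith])
  refine ⟨ω, ?_⟩
  rwa [Gfun_eq hy.1 (le_of_lt hy.2)]
end
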